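/- arXiv:2307.01194 — 8 statements merged into one kernel-verified Lean document; each statement's English description precedes it below -/
import Mathlib

section
/- Let (A_i)_{i≥1} be a sequence of events in a probability space such that ∑_{i=1}^∞ P(A_i) = ∞. Then the probability that infinitely many of the events A_i occur is at least limsup_{n→∞} (∑_{i=1}^n P(A_i))² / (∑_{i,j=1}^n P(A_i ∩ A_j)). -/
open MeasureTheory Filter
open scoped ENNReal NNReal Topology

/-- Second moment (Cauchy–Schwarz) estimate for a finite family of events. -/
lemma kochen_stone_aux {Ω : Type*} [MeasurableSpace Ω] (μ : Measure Ω)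
    (A : ℕ → Set Ω) (hA : ∀ i, MeasurableSet (A i)) (s : Finset ℕ) :
    (∑ i ∈ s, μ (A i)) ^ 2 ≤
      (∑ i ∈ s, ∑ j ∈ s, μ (A i ∩ A j)) * μ (⋃ i ∈ s, A i) := by
  classical
  set f : Ω → ℝ≥0∞ := fun ω => ∑ i ∈ s, (A i).indicator 1 ω with hf
  set E : Set Ω := ⋃ i ∈ s, A i with hE
  have hEmeas : MeasurableSet E := MeasurableSet.biUnion s.countable_toSet fun i _ => hA i
  have hindmeas : ∀ i : ℕ, Measurable ((A i).indicator (1 : Ω → ℝ≥0∞)) := fun i =>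
    measurable_const.indicator (hA i)
  have hfmeas : Measurable f := Finset.measurable_sum s fun i _ => hindmeas i
  set g : Ω → ℝ≥0∞ := E.indicator 1 with hg
  have hgmeas : Measurable g := measurable_const.indicator hEmeas
  have hfg : ∀ ω, f ω * g ω = f ω := by
    intro ω
    by_cases hω : ω ∈ E
    · simp [hg, Set.indicator_of_mem hω]
    · have : f ω = 0 := by
        apply Finset.sum_eq_zero
        intro i hi
        have : ω ∉ A i := fun h => hω (Set.mem_biUnion hi h)
        simp [Set.indicator_of_notMem this]
      simp [this]
  have h1 : ∫⁻ ω, f ω ∂μ = ∑ i ∈ s, μ (A i) := by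
    rw [hf, lintegral_finset_sum s fun i _ => hindmeas i]
    exact Finset.sum_congr rfl fun i _ => lintegral_indicator_one (hA i)
  have h2 : ∫⁻ ω, f ω ^ 2 ∂μ = ∑ i ∈ s, ∑ j ∈ s, μ (A i ∩ A j) := by
    have hpt : ∀ ω, f ω ^ 2 = ∑ i ∈ s, ∑ j ∈ s, (A i ∩ A j).indicator 1 ω := by
      intro ω
      rw [hf, sq, Finset.sum_mul_sum]
      refine Finset.sum_congr rfl fun i _ => Finset.sum_congr rfl fun j _ => ?_
      by_cases h : ω ∈ A i <;> by_cases h' : ω ∈ A j <;>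
        simp [Set.indicator_apply, Set.mem_inter_iff, h, h']
    have hmeas2 : ∀ i j : ℕ, Measurable ((A i ∩ A j).indicator (1 : Ω → ℝ≥0∞)) :=
      fun i j => measurable_const.indicator ((hA i).inter (hA j))
    simp_rw [hpt]
    rw [lintegral_finset_sum s fun i _ => Finset.measurable_sum s fun j _ => hmeas2 i j]
    refine Finset.sum_congr rfl fun i _ => ?_
    rw [lintegral_finset_sum s fun j _ => hmeas2 i j]
    exact Finset.sum_congr rfl fun j _ => lintegral_indicator_one ((hA i).inter (hA j))
  have hpq : Real.HolderConjugate 2 2 := Real.HolderConjugate.two_two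
  have holder := ENNReal.lintegral_mul_le_Lp_mul_Lq μ hpq hfmeas.aemeasurable hgmeas.aemeasurable
  have hgpow : ∀ ω, g ω ^ (2 : ℝ) = g ω := by
    intro ω
    by_cases h : ω ∈ E <;> simp [hg, Set.indicator_apply, h]
  have hfpow : ∀ ω, f ω ^ (2 : ℝ) = f ω ^ 2 := by
    intro ω
    rw [show ((2 : ℝ) = ((2 : ℕ) : ℝ)) by norm_num, ENNReal.rpow_natCast]
  have holder' : ∫⁻ ω, f ω ∂μ ≤
      (∫⁻ ω, f ω ^ 2 ∂μ) ^ ((1 : ℝ) / 2) * (μ E) ^ ((1 : ℝ) / 2) := by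
    calc ∫⁻ ω, f ω ∂μ = ∫⁻ ω, (f * g) ω ∂μ := by
          refine lintegral_congr fun ω => (hfg ω).symm
      _ ≤ (∫⁻ ω, f ω ^ (2 : ℝ) ∂μ) ^ ((1 : ℝ) / 2) *
            (∫⁻ ω, g ω ^ (2 : ℝ) ∂μ) ^ ((1 : ℝ) / 2) := holder
      _ = (∫⁻ ω, f ω ^ 2 ∂μ) ^ ((1 : ℝ) / 2) * (μ E) ^ ((1 : ℝ) / 2) := by
          congr 1
          · congr 1
            exact lintegral_congr fun ω => hfpow ω
          · congr 1
            rw [show (∫⁻ ω, g ω ^ (2 : ℝ) ∂μ) = ∫⁻ ω, g ω ∂μ from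
              lintegral_congr fun ω => hgpow ω]
            exact lintegral_indicator_one hEmeas
  have hsq : ((∫⁻ ω, f ω ^ 2 ∂μ) ^ ((1 : ℝ) / 2) * (μ E) ^ ((1 : ℝ) / 2)) ^ 2 =
      (∫⁻ ω, f ω ^ 2 ∂μ) * μ E := by
    rw [mul_pow]
    congr 1 <;>
    · rw [← ENNReal.rpow_natCast (_ ^ ((1 : ℝ) / 2)) 2, ← ENNReal.rpow_mul]
      norm_num
  calc (∑ i ∈ s, μ (A i)) ^ 2 = (∫⁻ ω, f ω ∂μ) ^ 2 := by rw [h1]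
    _ ≤ ((∫⁻ ω, f ω ^ 2 ∂μ) ^ ((1 : ℝ) / 2) * (μ E) ^ ((1 : ℝ) / 2)) ^ 2 :=
        pow_le_pow_left₀ zero_le holder' 2
    _ = (∫⁻ ω, f ω ^ 2 ∂μ) * μ E := hsq
    _ = (∑ i ∈ s, ∑ j ∈ s, μ (A i ∩ A j)) * μ E := by rw [h2]

/-- **Kochen–Stone theorem.** If the probabilities of a sequence of events sum to infinity,
then the probability that infinitely many of them occur is at least
`limsup_n (∑_{i<n} P(A_i))² / (∑_{i,j<n} P(A_i ∩ A_j))`. -/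
theorem kochen_stone {Ω : Type*} [MeasurableSpace Ω] (μ : Measure Ω)
    [IsProbabilityMeasure μ] (A : ℕ → Set Ω) (hA : ∀ i, MeasurableSet (A i))
    (hsum : ∑' i, μ (A i) = ⊤) :
    atTop.limsup (fun n =>
        (∑ i ∈ Finset.range n, μ (A i)) ^ 2 /
          (∑ i ∈ Finset.range n, ∑ j ∈ Finset.range n, μ (A i ∩ A j))) ≤
      μ (Filter.limsup A atTop) := by
  classical
  set U : ℕ → Set Ω := fun m => ⋃ i, ⋃ (_ : m ≤ i), A i with hU
  have hUmeas : ∀ m, MeasurableSet (U m) := fun m =>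
    MeasurableSet.iUnion fun i => MeasurableSet.iUnion fun _ => hA i
  have hUanti : Antitone U := by
    intro m m' h x hx
    simp only [hU, Set.mem_iUnion] at hx ⊢
    obtain ⟨i, hi, hxi⟩ := hx
    exact ⟨i, h.trans hi, hxi⟩
  have key : ∀ m, atTop.limsup (fun n =>
      (∑ i ∈ Finset.range n, μ (A i)) ^ 2 /
        (∑ i ∈ Finset.range n, ∑ j ∈ Finset.range n, μ (A i ∩ A j))) ≤ μ (U m) := by
    intro m
    refine ENNReal.le_of_forall_pos_le_add fun ε hε hLtop => ?_
    set c : ℝ≥0∞ := ∑ i ∈ Finset.range m, μ (A i) with hc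
    have hctop : c ≠ ⊤ :=
      (ENNReal.sum_lt_top.2 fun i _ => measure_lt_top μ _).ne
    have hε0 : (ε : ℝ≥0∞) ≠ 0 := ENNReal.coe_ne_zero.2 hε.ne'
    set C : ℝ≥0∞ := 1 + (c ^ 2 + 2 * c) / ε with hC
    have hCtop : C + c ≠ ⊤ := by
      have h2 : (c ^ 2 + 2 * c) / ↑ε ≠ ⊤ :=
        (ENNReal.div_lt_top (ENNReal.add_ne_top.2
          ⟨ENNReal.pow_ne_top hctop, ENNReal.mul_ne_top (by simp) hctop⟩) hε0).ne
      simp [hC, ENNReal.add_ne_top, h2, hctop]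
    obtain ⟨n₀, hn₀⟩ : ∃ n₀, C + c < ∑ i ∈ Finset.range n₀, μ (A i) := by
      rw [ENNReal.tsum_eq_iSup_nat] at hsum
      have h3 : C + c < ⨆ n, ∑ i ∈ Finset.range n, μ (A i) := by
        rw [hsum]; exact hCtop.lt_top
      exact lt_iSup_iff.1 h3
    refine limsup_le_of_le (by isBoundedDefault) ?_
    filter_upwards [eventually_ge_atTop (max n₀ m)] with n hn
    have hmn : m ≤ n := le_trans (le_max_right _ _) hn
    have hn₀n : n₀ ≤ n := le_trans (le_max_left _ _) hn
    set S : ℝ≥0∞ := ∑ i ∈ Finset.Ico m n, μ (A i) with hS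
    set T : ℝ≥0∞ := ∑ i ∈ Finset.Ico m n, ∑ j ∈ Finset.Ico m n, μ (A i ∩ A j) with hT
    have hsplit : ∑ i ∈ Finset.range n, μ (A i) = c + S := by
      rw [hc, hS, Finset.range_eq_Ico, ← Finset.sum_Ico_consecutive _ (Nat.zero_le m) hmn,
        ← Finset.range_eq_Ico]
    have hSC : C ≤ S := by
      have h1 : C + c ≤ ∑ i ∈ Finset.range n, μ (A i) :=
        hn₀.le.trans (Finset.sum_le_sum_of_subset (Finset.range_subset_range.2 hn₀n))
      rw [hsplit, add_comm c S] at h1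
      exact (ENNReal.add_le_add_iff_right hctop).1 h1
    have hS1 : 1 ≤ S := le_trans le_self_add hSC
    have hεS : c ^ 2 + 2 * c ≤ (ε : ℝ≥0∞) * S := by
      have h1 : (c ^ 2 + 2 * c) / ε ≤ S := le_trans le_add_self hSC
      rw [ENNReal.div_le_iff hε0 ENNReal.coe_ne_top] at h1
      rwa [mul_comm S (ε : ℝ≥0∞)] at h1
    have hCS : S ^ 2 ≤ T * μ (U m) := by
      refine (kochen_stone_aux μ A hA (Finset.Ico m n)).trans ?_
      refine mul_le_mul_right (measure_mono ?_) T
      intro x hx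
      simp only [Set.mem_iUnion] at hx
      obtain ⟨i, hi, hxi⟩ := hx
      simp only [hU, Set.mem_iUnion]
      exact ⟨i, (Finset.mem_Ico.1 hi).1, hxi⟩
    have hST : S ^ 2 ≤ T := by
      refine hCS.trans ?_
      calc T * μ (U m) ≤ T * 1 := mul_le_mul_right prob_le_one T
        _ = T := mul_one T
    have hnum : (c + S) ^ 2 ≤ (μ (U m) + ε) * T := by
      calc (c + S) ^ 2 = c ^ 2 + 2 * c * S + S ^ 2 := add_sq c S
        _ ≤ (c ^ 2 + 2 * c) * S + S ^ 2 := by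
            rw [add_mul]
            exact add_le_add_left
              (add_le_add_left (le_mul_of_one_le_right' hS1) _) _
        _ ≤ (ε : ℝ≥0∞) * S * S + S ^ 2 := add_le_add_left (mul_le_mul_left hεS S) _
        _ = (ε : ℝ≥0∞) * S ^ 2 + S ^ 2 := by ring
        _ ≤ (ε : ℝ≥0∞) * T + T * μ (U m) := add_le_add (mul_le_mul_right hST _) hCS
        _ = (μ (U m) + ε) * T := by ring
    have hTT : T ≤ ∑ i ∈ Finset.range n, ∑ j ∈ Finset.range n, μ (A i ∩ A j) := by
      have hsub : Finset.Ico m n ⊆ Finset.range n := by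
        rw [Finset.range_eq_Ico]; exact Finset.Ico_subset_Ico (Nat.zero_le m) le_rfl
      refine le_trans (Finset.sum_le_sum fun i _ => Finset.sum_le_sum_of_subset hsub) ?_
      exact Finset.sum_le_sum_of_subset hsub
    calc (∑ i ∈ Finset.range n, μ (A i)) ^ 2 /
          (∑ i ∈ Finset.range n, ∑ j ∈ Finset.range n, μ (A i ∩ A j))
        ≤ (∑ i ∈ Finset.range n, μ (A i)) ^ 2 / T := ENNReal.div_le_div_left hTT _
      _ = (c + S) ^ 2 / T := by rw [hsplit]
      _ ≤ μ (U m) + ε := ENNReal.div_le_of_le_mul hnum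
  have htend : Tendsto (fun m => μ (U m)) atTop (𝓝 (μ (⋂ m, U m))) :=
    tendsto_measure_iInter_atTop (fun m => (hUmeas m).nullMeasurableSet) hUanti
      ⟨0, measure_ne_top μ _⟩
  have hfinal := ge_of_tendsto' htend key
  have hlimsup : Filter.limsup A atTop = ⋂ m, U m := by
    rw [limsup_eq_iInf_iSup_of_nat]
    simp only [hU, Set.iInf_eq_iInter, Set.iSup_eq_iUnion, ge_iff_le]
  rwa [hlimsup]
end

section
/- Let (A_i)_{i≥1} be events in a probability space with P(A_i) = c > 0 for all i, and suppose P(A_i ∩ A_j) ≤ c²(1+2^{-i})(1+2^{-j}) for all i ≠ j. Then almost surely infinitely many of the events A_i occur. -/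
open MeasureTheory Filter
open scoped ENNReal

lemma chung_erdos {Ω : Type*} [MeasurableSpace Ω] (μ : Measure Ω) (A : ℕ → Set Ω)
    (hA : ∀ i, MeasurableSet (A i)) (s : Finset ℕ) :
    (∑ i ∈ s, μ (A i)) ^ 2 ≤ μ (⋃ i ∈ s, A i) * ∑ i ∈ s, ∑ j ∈ s, μ (A i ∩ A j) := by
  set f : Ω → ℝ≥0∞ := fun x => ∑ i ∈ s, (A i).indicator 1 x with hfdef
  set U : Set Ω := ⋃ i ∈ s, A i with hU
  have hUm : MeasurableSet U := MeasurableSet.biUnion s.countable_toSet (fun i _ => hA i)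
  have hfm : Measurable f := by
    apply Finset.measurable_sum
    intro i _
    exact (measurable_one.indicator (hA i))
  have h1 : ∫⁻ x, f x ∂μ = ∑ i ∈ s, μ (A i) := by
    rw [lintegral_finset_sum _ (fun i _ => measurable_one.indicator (hA i))]
    simp [lintegral_indicator, hA]
  have h2 : ∫⁻ x, f x ^ 2 ∂μ = ∑ i ∈ s, ∑ j ∈ s, μ (A i ∩ A j) := by
    have hsq : ∀ x, f x ^ 2 = ∑ i ∈ s, ∑ j ∈ s, (A i ∩ A j).indicator 1 x := by
      intro x
      rw [sq, hfdef]
      rw [Finset.sum_mul_sum]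
      refine Finset.sum_congr rfl fun i _ => Finset.sum_congr rfl fun j _ => ?_
      have := Set.inter_indicator_mul (s := A i) (t := A j) (f := (1 : Ω → ℝ≥0∞))
        (g := (1 : Ω → ℝ≥0∞)) x
      simpa [Pi.one_def] using this.symm
    simp only [hsq]
    rw [lintegral_finset_sum _ (fun i _ => Finset.measurable_sum _
      (fun j _ => measurable_one.indicator ((hA i).inter (hA j))))]
    refine Finset.sum_congr rfl fun i _ => ?_
    rw [lintegral_finset_sum _ (fun j _ => measurable_one.indicator ((hA i).inter (hA j)))]
    simp [lintegral_indicator, (hA _).inter (hA _)]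
  have hfU : ∀ x, f x = f x * U.indicator 1 x := by
    intro x
    by_cases hx : x ∈ U
    · simp [Set.indicator_of_mem hx]
    · have : f x = 0 := Finset.sum_eq_zero fun i hi =>
        Set.indicator_of_notMem (fun h => hx (Set.mem_biUnion hi h)) _
      simp [this]
  have hconj : Real.HolderConjugate 2 2 := Real.holderConjugate_iff.mpr ⟨one_lt_two, by norm_num⟩
  have hCS := ENNReal.lintegral_mul_le_Lp_mul_Lq μ hconj hfm.aemeasurable
    ((measurable_one.indicator hUm)).aemeasurable
  have hg2 : ∫⁻ x, (U.indicator (1 : Ω → ℝ≥0∞) x) ^ (2:ℝ) ∂μ = μ U := by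
    have : ∀ x, (U.indicator (1 : Ω → ℝ≥0∞) x) ^ (2:ℝ) = U.indicator 1 x := by
      intro x; by_cases hx : x ∈ U <;> simp [hx, ENNReal.rpow_two]
    simp only [this]
    simp [lintegral_indicator, hUm]
  have key : ∑ i ∈ s, μ (A i) ≤ (∑ i ∈ s, ∑ j ∈ s, μ (A i ∩ A j)) ^ ((1:ℝ)/2) * (μ U) ^ ((1:ℝ)/2) := by
    calc ∑ i ∈ s, μ (A i) = ∫⁻ x, f x ∂μ := h1.symm
      _ = ∫⁻ x, f x * U.indicator 1 x ∂μ := by simp only [← hfU]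
      _ ≤ (∫⁻ x, f x ^ (2:ℝ) ∂μ) ^ ((1:ℝ)/2) * (∫⁻ x, (U.indicator (1:Ω→ℝ≥0∞) x) ^ (2:ℝ) ∂μ) ^ ((1:ℝ)/2) := hCS
      _ = (∑ i ∈ s, ∑ j ∈ s, μ (A i ∩ A j)) ^ ((1:ℝ)/2) * (μ U) ^ ((1:ℝ)/2) := by
          rw [hg2]
          congr 1
          rw [← h2]
          congr 1
          exact lintegral_congr fun x => by rw [ENNReal.rpow_two]
  calc (∑ i ∈ s, μ (A i)) ^ 2
      ≤ ((∑ i ∈ s, ∑ j ∈ s, μ (A i ∩ A j)) ^ ((1:ℝ)/2) * (μ U) ^ ((1:ℝ)/2)) ^ 2 := by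
        exact pow_le_pow_left' key 2
    _ = μ U * ∑ i ∈ s, ∑ j ∈ s, μ (A i ∩ A j) := by
        rw [mul_pow, ← ENNReal.rpow_natCast ((∑ i ∈ s, ∑ j ∈ s, μ (A i ∩ A j)) ^ ((1:ℝ)/2)) 2,
          ← ENNReal.rpow_natCast (μ (⋃ i ∈ s, A i) ^ ((1:ℝ)/2)) 2,
          ← ENNReal.rpow_mul, ← ENNReal.rpow_mul]
        norm_num [mul_comm]
        rfl

lemma geom_tail_le_two (k n : ℕ) : ∑ i ∈ Finset.Ico k n, (2:ℝ) ^ (-(i:ℝ)) ≤ 2 := by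
  have heq : ∀ i : ℕ, (2:ℝ) ^ (-(i:ℝ)) = (1/2:ℝ) ^ i := by
    intro i
    rw [Real.rpow_neg (by norm_num), Real.rpow_natCast]
    rw [one_div, inv_pow]
  calc ∑ i ∈ Finset.Ico k n, (2:ℝ) ^ (-(i:ℝ)) = ∑ i ∈ Finset.Ico k n, (1/2:ℝ) ^ i := by
        exact Finset.sum_congr rfl fun i _ => heq i
    _ ≤ ∑ i ∈ Finset.range n, (1/2:ℝ) ^ i := by
        apply Finset.sum_le_sum_of_subset_of_nonneg
        · intro i hi; simp only [Finset.mem_Ico, Finset.mem_range] at *; omega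
        · intro i _ _; positivity
    _ ≤ 2 := sum_geometric_two_le n

lemma ratio_tendsto (c : ℝ) (hc : 0 < c) :
    Tendsto (fun m : ℕ => ((m:ℝ)*c)^2 / ((m:ℝ)*c + c^2*((m:ℝ)+2)^2)) atTop (nhds 1) := by
  have h1 : Tendsto (fun m:ℕ => c / (m:ℝ)) atTop (nhds 0) :=
    tendsto_const_div_atTop_nhds_zero_nat c
  have h2 : Tendsto (fun m:ℕ => 2 / (m:ℝ)) atTop (nhds 0) :=
    tendsto_const_div_atTop_nhds_zero_nat 2
  have hden : Tendsto (fun m:ℕ => c/(m:ℝ) + c^2*(1+2/(m:ℝ))^2) atTop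
      (nhds (0 + c^2*(1+0)^2)) := by
    exact h1.add (((tendsto_const_nhds.add h2).pow 2).const_mul (c^2))
  have hne : (0:ℝ) + c^2*(1+0)^2 ≠ 0 := by positivity
  have hdiv : Tendsto (fun m:ℕ => c^2 / (c/(m:ℝ) + c^2*(1+2/(m:ℝ))^2)) atTop
      (nhds (c^2 / (0 + c^2*(1+0)^2))) := Tendsto.div tendsto_const_nhds hden hne
  have hval : c^2 / ((0:ℝ) + c^2*(1+0)^2) = 1 := by field_simp; ring
  rw [hval] at hdiv
  refine hdiv.congr' ?_
  filter_upwards [eventually_ge_atTop 1] with m hm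
  have hm0 : (m:ℝ) ≠ 0 := Nat.cast_ne_zero.mpr (by omega)
  field_simp

/-- Almost-independent Borel–Cantelli: if all events have the same probability `c > 0`
and `P(A_i ∩ A_j) ≤ c²(1+2^{-i})(1+2^{-j})` for `i ≠ j`, then almost surely infinitely
many of the events occur. -/
theorem borelCantelli_almost_independent {Ω : Type*} [MeasurableSpace Ω] (μ : Measure Ω)
    [IsProbabilityMeasure μ] (A : ℕ → Set Ω) (hA : ∀ i, MeasurableSet (A i))
    (c : ℝ) (hc : 0 < c) (hmeas : ∀ i, μ (A i) = ENNReal.ofReal c)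
    (hpair : ∀ i j : ℕ, i ≠ j →
      μ (A i ∩ A j) ≤ ENNReal.ofReal (c ^ 2 * (1 + 2 ^ (-(i : ℝ))) * (1 + 2 ^ (-(j : ℝ))))) :
    μ (Filter.limsup A atTop) = 1 := by
  set T : ℕ → Set Ω := fun n => ⋃ i, ⋃ (_ : n ≤ i), A i with hT
  have hc2 : ∀ i : ℕ, (0:ℝ) ≤ 2 ^ (-(i:ℝ)) := fun i => Real.rpow_nonneg (by norm_num) _
  have hlow : ∀ k m : ℕ,
      ENNReal.ofReal (((m:ℝ)*c)^2 / ((m:ℝ)*c + c^2*((m:ℝ)+2)^2)) ≤ μ (T k) := by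
    intro k m
    set s := Finset.Ico k (k+m) with hs
    have hcard : s.card = m := by simp [hs]
    have hsub : (⋃ i ∈ s, A i) ⊆ T k := by
      refine Set.iUnion₂_subset fun i hi => ?_
      have hk : k ≤ i := (Finset.mem_Ico.mp hi).1
      intro x hx
      exact Set.mem_iUnion.mpr ⟨i, Set.mem_iUnion.mpr ⟨hk, hx⟩⟩
    have hCE := chung_erdos μ A hA s
    have ha : ∑ i ∈ s, μ (A i) = ENNReal.ofReal ((m:ℝ)*c) := by
      simp only [hmeas]
      rw [Finset.sum_const, hcard, nsmul_eq_mul,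
        ENNReal.ofReal_mul (Nat.cast_nonneg m), ENNReal.ofReal_natCast]
    set D : ℝ := (m:ℝ)*c + c^2*((m:ℝ)+2)^2 with hD
    have hnn : ∀ i j : ℕ,
        (0:ℝ) ≤ (if i = j then c else c^2*(1+2^(-(i:ℝ)))*(1+2^(-(j:ℝ)))) := by
      intro i j
      by_cases h : i = j
      · simp [h, hc.le]
      · simp only [h, if_false]
        have := hc2 i; have := hc2 j
        positivity
    have hb : ∀ i ∈ s, ∀ j ∈ s, μ (A i ∩ A j) ≤
        ENNReal.ofReal (if i = j then c else c^2*(1+2^(-(i:ℝ)))*(1+2^(-(j:ℝ)))) := by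
      intro i _ j _
      by_cases h : i = j
      · subst h; simp [Set.inter_self, hmeas]
      · simpa [h] using hpair i j h
    have hE : ∑ i ∈ s, (1 + (2:ℝ)^(-(i:ℝ))) ≤ (m:ℝ) + 2 := by
      rw [Finset.sum_add_distrib, Finset.sum_const, hcard, nsmul_eq_mul, mul_one]
      have hgeom : ∑ i ∈ s, (2:ℝ)^(-(i:ℝ)) ≤ 2 := by
        rw [hs]; exact geom_tail_le_two k (k+m)
      linarith
    have hE0 : (0:ℝ) ≤ ∑ i ∈ s, (1 + (2:ℝ)^(-(i:ℝ))) :=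
      Finset.sum_nonneg fun i _ => by have := hc2 i; linarith
    have hreal : ∑ i ∈ s, ∑ j ∈ s,
        (if i = j then c else c^2*(1+2^(-(i:ℝ)))*(1+2^(-(j:ℝ)))) ≤ D := by
      have hterm : ∀ i j : ℕ,
          (if i = j then c else c^2*(1+2^(-(i:ℝ)))*(1+2^(-(j:ℝ)))) ≤
          (if i = j then c else 0) + c^2*(1+2^(-(i:ℝ)))*(1+2^(-(j:ℝ))) := by
        intro i j
        by_cases h : i = j
        · simp only [h, if_true]
          have h0 : 0 ≤ c^2*(1+2^(-(j:ℝ)))*(1+2^(-(j:ℝ))) := by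
            have := hc2 j; positivity
          linarith
        · simp [h]
      calc ∑ i ∈ s, ∑ j ∈ s, (if i = j then c else c^2*(1+2^(-(i:ℝ)))*(1+2^(-(j:ℝ))))
          ≤ ∑ i ∈ s, ∑ j ∈ s,
            ((if i = j then c else 0) + c^2*(1+2^(-(i:ℝ)))*(1+2^(-(j:ℝ)))) :=
            Finset.sum_le_sum fun i _ => Finset.sum_le_sum fun j _ => hterm i j
        _ = (∑ i ∈ s, ∑ j ∈ s, (if i = j then c else 0)) +
            ∑ i ∈ s, ∑ j ∈ s, c^2*(1+2^(-(i:ℝ)))*(1+2^(-(j:ℝ))) := by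
            rw [← Finset.sum_add_distrib]
            exact Finset.sum_congr rfl fun i _ => Finset.sum_add_distrib
        _ ≤ (m:ℝ)*c + c^2*((m:ℝ)+2)^2 := by
            have hd1 : (∑ i ∈ s, ∑ j ∈ s, (if i = j then c else 0)) = (m:ℝ)*c := by
              have : ∀ i ∈ s, (∑ j ∈ s, (if i = j then c else 0)) = c := by
                intro i hi
                rw [Finset.sum_ite_eq s i (fun _ => c)]
                simp [hi]
              rw [Finset.sum_congr rfl this, Finset.sum_const, hcard, nsmul_eq_mul]
            have hd2 : ∑ i ∈ s, ∑ j ∈ s, c^2*(1+(2:ℝ)^(-(i:ℝ)))*(1+(2:ℝ)^(-(j:ℝ))) =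
                c^2 * ((∑ i ∈ s, (1+(2:ℝ)^(-(i:ℝ)))) * (∑ j ∈ s, (1+(2:ℝ)^(-(j:ℝ))))) := by
              rw [Finset.sum_mul_sum, Finset.mul_sum]
              exact Finset.sum_congr rfl fun i _ => by
                rw [Finset.mul_sum]
                exact Finset.sum_congr rfl fun j _ => by ring
            rw [hd1, hd2]
            have : (∑ i ∈ s, (1+(2:ℝ)^(-(i:ℝ)))) * (∑ j ∈ s, (1+(2:ℝ)^(-(j:ℝ)))) ≤
                ((m:ℝ)+2)^2 := by
              rw [pow_two]
              exact mul_le_mul hE hE hE0 (by positivity)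
            nlinarith [sq_nonneg c]
    have hdsum : ∑ i ∈ s, ∑ j ∈ s, μ (A i ∩ A j) ≤ ENNReal.ofReal D := by
      calc ∑ i ∈ s, ∑ j ∈ s, μ (A i ∩ A j)
          ≤ ∑ i ∈ s, ∑ j ∈ s,
            ENNReal.ofReal (if i = j then c else c^2*(1+2^(-(i:ℝ)))*(1+2^(-(j:ℝ)))) :=
            Finset.sum_le_sum fun i hi => Finset.sum_le_sum fun j hj => hb i hi j hj
        _ = ENNReal.ofReal (∑ i ∈ s, ∑ j ∈ s,
            (if i = j then c else c^2*(1+2^(-(i:ℝ)))*(1+2^(-(j:ℝ))))) := by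
            rw [ENNReal.ofReal_sum_of_nonneg
              (fun i _ => Finset.sum_nonneg fun j _ => hnn i j)]
            exact Finset.sum_congr rfl fun i _ =>
              (ENNReal.ofReal_sum_of_nonneg (fun j _ => hnn i j)).symm
        _ ≤ ENNReal.ofReal D := ENNReal.ofReal_le_ofReal hreal
    have hD0 : 0 < D := by
      have h1 : 0 ≤ (m:ℝ)*c := mul_nonneg (Nat.cast_nonneg m) hc.le
      have h2 : 0 < c^2*((m:ℝ)+2)^2 := mul_pos (pow_pos hc 2) (by positivity)
      rw [hD]; linarith
    have hfinal : ENNReal.ofReal (((m:ℝ)*c)^2 / D) ≤ μ (⋃ i ∈ s, A i) := by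
      rw [ENNReal.ofReal_div_of_pos hD0]
      apply ENNReal.div_le_of_le_mul
      rw [ENNReal.ofReal_pow (mul_nonneg (Nat.cast_nonneg m) hc.le), ← ha]
      exact hCE.trans (mul_le_mul_right hdsum _)
    exact hfinal.trans (measure_mono hsub)
  have hT1 : ∀ k, (1:ℝ≥0∞) ≤ μ (T k) := by
    intro k
    have h1 : Tendsto (fun m : ℕ =>
        ENNReal.ofReal (((m:ℝ)*c)^2 / ((m:ℝ)*c + c^2*((m:ℝ)+2)^2))) atTop (nhds 1) := by
      have := ENNReal.tendsto_ofReal (ratio_tendsto c hc)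
      simpa using this
    exact le_of_tendsto h1 (Filter.Eventually.of_forall fun m => hlow k m)
  have hls : Filter.limsup A atTop = ⋂ n, T n := by
    rw [limsup_eq_iInf_iSup_of_nat]
    rfl
  rw [hls]
  refine le_antisymm prob_le_one ?_
  have hcompl : μ (⋂ n, T n)ᶜ = 0 := by
    rw [Set.compl_iInter]
    refine measure_iUnion_null fun n => ?_
    have hTm : MeasurableSet (T n) :=
      MeasurableSet.iUnion fun i => MeasurableSet.iUnion fun _ => hA i
    have h1 : μ (T n) = 1 := le_antisymm prob_le_one (hT1 n)
    simp [measure_compl hTm (measure_ne_top μ _), h1]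
  calc (1:ℝ≥0∞) = μ Set.univ := measure_univ.symm
    _ ≤ μ (⋂ n, T n) + μ (⋂ n, T n)ᶜ := by
        rw [← Set.union_compl_self (⋂ n, T n)]
        exact measure_union_le _ _
    _ = μ (⋂ n, T n) := by rw [hcompl, add_zero]
end

section
/- Let A ⊆ ℝ be a dense subgroup and let W ⊆ ℝ² be a Lebesgue measurable set of finite measure. Then for Lebesgue-almost every (t, t') ∈ W, the set {u ∈ A : (t+u, t'−u) ∈ W} is infinite. -/
open MeasureTheory Filter Set
open scoped Topology symmDiff ENNReal

private theorem aux_symmdiff (W : Set (ℝ × ℝ)) (hW : MeasurableSet W) (hWfin : volume W ≠ ⊤) :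
    Tendsto (fun u : ℝ ↦ volume (((fun p : ℝ × ℝ ↦ (p.1 + u, p.2 - u)) ⁻¹' W) ∆ W)) (𝓝 0)
      (𝓝 0) := by
  have hF : ∀ u : ℝ, Continuous fun p : ℝ × ℝ ↦ (p.1 + u, p.2 - u) := by
    intro u; fun_prop
  set F : ℝ → C(ℝ × ℝ, ℝ × ℝ) := fun u ↦ ⟨fun p ↦ (p.1 + u, p.2 - u), hF u⟩ with hFdef
  have hFc : Continuous F := by
    apply ContinuousMap.continuous_of_continuous_uncurry
    show Continuous fun q : ℝ × (ℝ × ℝ) ↦ (q.2.1 + q.1, q.2.2 - q.1)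
    fun_prop
  have hmp : ∀ u : ℝ, MeasurePreserving (F u) volume volume := by
    intro u
    have : (F u : ℝ × ℝ → ℝ × ℝ) = fun p ↦ p + (u, -u) := by
      ext p <;> simp [hFdef, sub_eq_add_neg]
    rw [hFdef]
    simp only [ContinuousMap.coe_mk] at this ⊢
    rw [show (fun p : ℝ × ℝ ↦ (p.1 + u, p.2 - u)) = fun p ↦ p + (u, -u) from this]
    exact measurePreserving_add_right volume (u, -u)
  have key := tendsto_measure_symmDiff_preimage_nhds_zero (μ := (volume : Measure (ℝ × ℝ)))
    (ν := (volume : Measure (ℝ × ℝ))) (f := F) (g := F 0) (s := W)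
    (hFc.tendsto 0) (.of_forall hmp) (hmp 0) hW.nullMeasurableSet hWfin
  have h0 : (F 0 : ℝ × ℝ → ℝ × ℝ) ⁻¹' W = W := by
    ext p; simp [hFdef]
  rw [h0] at key
  exact key

/-- If `A ⊆ ℝ` is a dense subgroup and `W ⊆ ℝ²` is measurable of finite measure, then for
Lebesgue-almost every `(t, t') ∈ W`, the set `{u ∈ A : (t+u, t'−u) ∈ W}` is infinite. -/
theorem dense_subgroup_translates_infinite (A : AddSubgroup ℝ) (hA : Dense (A : Set ℝ))
    (W : Set (ℝ × ℝ)) (hW : MeasurableSet W) (hWfin : volume W ≠ ⊤) :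
    ∀ᵐ p ∂(volume.restrict W),
      {u : ℝ | u ∈ A ∧ (p.1 + u, p.2 - u) ∈ W}.Infinite := by
  have key := aux_symmdiff W hW hWfin
  -- for each `n`, find `δ n > 0` such that `|u| < δ n` implies small symmetric difference
  have hδex : ∀ n : ℕ, ∃ δ : ℝ, 0 < δ ∧ ∀ u : ℝ, |u| < δ →
      volume (((fun p : ℝ × ℝ ↦ (p.1 + u, p.2 - u)) ⁻¹' W) ∆ W) < (2⁻¹ : ℝ≥0∞) ^ n := by
    intro n
    have hpos : (0 : ℝ≥0∞) < (2⁻¹ : ℝ≥0∞) ^ n :=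
      ENNReal.pow_pos (ENNReal.inv_pos.mpr (by norm_num)) n
    have := key.eventually_lt_const hpos
    rw [Metric.eventually_nhds_iff] at this
    obtain ⟨δ, hδ, h⟩ := this
    exact ⟨δ, hδ, fun u hu ↦ h (by simpa [Real.dist_eq] using hu)⟩
  choose δ hδpos hδ using hδex
  -- choose a strictly decreasing sequence in `A`
  have hpick : ∀ c : ℝ, 0 < c → ∃ t : {x : ℝ // x ∈ (A : Set ℝ) ∧ 0 < x}, (t : ℝ) < c := by
    intro c hc
    obtain ⟨x, hxA, hx⟩ := hA.exists_mem_open isOpen_Ioo (⟨c / 2, by constructor <;> linarith⟩ :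
      (Set.Ioo (0 : ℝ) c).Nonempty)
    exact ⟨⟨x, hxA, hx.1⟩, hx.2⟩
  set T := {x : ℝ // x ∈ (A : Set ℝ) ∧ 0 < x}
  set u : ℕ → T := fun n ↦ Nat.rec (Classical.choose (hpick (δ 0) (hδpos 0)))
    (fun n x ↦ Classical.choose (hpick (min (x : ℝ) (δ (n + 1)))
      (lt_min x.2.2 (hδpos (n + 1))))) n with hu
  have hu0 : (u 0 : ℝ) < δ 0 := Classical.choose_spec (hpick (δ 0) (hδpos 0))
  have husucc : ∀ n, (u (n + 1) : ℝ) < min (u n : ℝ) (δ (n + 1)) := fun n ↦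
    Classical.choose_spec (hpick (min (u n : ℝ) (δ (n + 1))) (lt_min (u n).2.2 (hδpos (n + 1))))
  have hanti : StrictAnti fun n ↦ (u n : ℝ) :=
    strictAnti_nat_of_succ_lt fun n ↦ (husucc n).trans_le (min_le_left _ _)
  have hubound : ∀ n, volume (((fun p : ℝ × ℝ ↦ (p.1 + (u n : ℝ), p.2 - (u n : ℝ))) ⁻¹' W) ∆ W)
      < (2⁻¹ : ℝ≥0∞) ^ n := by
    intro n
    cases n with
    | zero => exact hδ 0 _ (by rw [abs_of_pos (u 0).2.2]; exact hu0)
    | succ n => exact hδ (n + 1) _ (by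
        rw [abs_of_pos (u (n + 1)).2.2]
        exact (husucc n).trans_le (min_le_right _ _))
  -- Borel–Cantelli
  set E : ℕ → Set (ℝ × ℝ) :=
    fun n ↦ W ∩ (fun p : ℝ × ℝ ↦ (p.1 + (u n : ℝ), p.2 - (u n : ℝ))) ⁻¹' Wᶜ with hE
  have hEsub : ∀ n, E n ⊆ ((fun p : ℝ × ℝ ↦ (p.1 + (u n : ℝ), p.2 - (u n : ℝ))) ⁻¹' W) ∆ W := by
    intro n x hx
    exact Or.inr ⟨hx.1, hx.2⟩
  have hsum : (∑' n, volume (E n)) ≠ ⊤ := by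
    have hle : (∑' n, volume (E n)) ≤ ∑' n : ℕ, (2⁻¹ : ℝ≥0∞) ^ n :=
      ENNReal.tsum_le_tsum fun n ↦ ((measure_mono (hEsub n)).trans (hubound n).le)
    rw [ENNReal.tsum_geometric] at hle
    refine ne_top_of_le_ne_top ?_ hle
    rw [ENNReal.one_sub_inv_two]
    simp
  have hBC := MeasureTheory.ae_eventually_notMem hsum
  filter_upwards [ae_restrict_of_ae hBC, ae_restrict_mem hW] with p hp hpW
  rw [Filter.eventually_atTop] at hp
  obtain ⟨N, hN⟩ := hp
  refine Set.infinite_of_injective_forall_mem (f := fun k : ℕ ↦ (u (N + k) : ℝ))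
    ((hanti.comp_strictMono fun a b h ↦ by omega).injective) ?_
  · intro k
    refine ⟨(u (N + k)).2.1, ?_⟩
    have := hN (N + k) (Nat.le_add_right _ _)
    simp only [hE, Set.mem_inter_iff, Set.mem_preimage, Set.mem_compl_iff, not_and,
      not_not] at this
    exact this hpW
end

section
/- Let ρ be a nonzero linear functional on a finite-dimensional Euclidean space 𝔞 of dimension d, with dual unit vector ρ̂ (so ρ(X) = ‖ρ‖⟨ρ̂, X⟩). Then ∫_{‖X‖ ≤ t} e^{2ρ(X)} dX is asymptotically equivalent, as t → ∞, to C · e^{2‖ρ‖t} t^{(d−1)/2} for some constant C > 0. -/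
open MeasureTheory Filter

open Set Real


-- B1: slice volume
theorem slice_vol (n : ℕ) (c : ℝ) (hc : 0 ≤ c) :
    volume {y : Fin n → ℝ | ∑ i, y i ^ 2 ≤ c}
      = ENNReal.ofReal (Real.sqrt c ^ n) * volume (Metric.ball (0 : EuclideanSpace ℝ (Fin n)) 1) := by
  have hmeas : MeasurableSet {y : Fin n → ℝ | ∑ i, y i ^ 2 ≤ c} := by
    apply measurableSet_le _ measurable_const
    exact Finset.measurable_sum _ (fun i _ => (measurable_pi_apply i).pow_const 2)
  have h := (EuclideanSpace.volume_preserving_symm_measurableEquiv_toLp (Fin n)).measure_preimage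
    hmeas.nullMeasurableSet
  have hpre : (MeasurableEquiv.toLp 2 (Fin n → ℝ)).symm ⁻¹' {y : Fin n → ℝ | ∑ i, y i ^ 2 ≤ c}
      = Metric.closedBall (0 : EuclideanSpace ℝ (Fin n)) (Real.sqrt c) := by
    ext Y
    simp only [mem_preimage, mem_setOf_eq, Metric.mem_closedBall, dist_zero_right]
    have hn : ‖Y‖ = Real.sqrt (∑ i, (Y i) ^ 2) := by
      rw [EuclideanSpace.norm_eq]
      congr 1
      refine Finset.sum_congr rfl (fun i _ => ?_)
      rw [Real.norm_eq_abs, sq_abs]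
    rw [hn]
    exact (Real.sqrt_le_sqrt_iff hc).symm
  rw [← h, hpre, Measure.addHaar_closedBall _ _ (Real.sqrt_nonneg c), finrank_euclideanSpace_fin]

theorem reduce (n : ℕ) (c t : ℝ) (ht : 0 ≤ t) :
    ∫ Y in Metric.closedBall (0 : EuclideanSpace ℝ (Fin (n+1))) t, Real.exp (c * Y 0)
      = (volume (Metric.ball (0 : EuclideanSpace ℝ (Fin n)) 1)).toReal *
        ∫ s in Icc (-t) t, Real.exp (c*s) * Real.sqrt (t^2 - s^2) ^ n := by
  set κ : ℝ := (volume (Metric.ball (0 : EuclideanSpace ℝ (Fin n)) 1)).toReal with hκ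
  -- the integrand, as indicator functions on various spaces
  set f : EuclideanSpace ℝ (Fin (n+1)) → ℝ :=
    (Metric.closedBall (0 : EuclideanSpace ℝ (Fin (n+1))) t).indicator
      (fun Y => Real.exp (c * Y 0)) with hf
  set S : Set (Fin (n+1) → ℝ) := {x | ∑ i, x i ^ 2 ≤ t ^ 2} with hS
  set G : (Fin (n+1) → ℝ) → ℝ := S.indicator (fun x => Real.exp (c * x 0)) with hG
  set T : Set (ℝ × (Fin n → ℝ)) := {p | p.1 ^ 2 + ∑ j, p.2 j ^ 2 ≤ t ^ 2} with hT
  set H : ℝ × (Fin n → ℝ) → ℝ := T.indicator (fun p => Real.exp (c * p.1)) with hH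
  have hSmeas : MeasurableSet S := by
    apply measurableSet_le _ measurable_const
    exact Finset.measurable_sum _ (fun i _ => (measurable_pi_apply i).pow_const 2)
  have hTmeas : MeasurableSet T := by
    apply measurableSet_le _ measurable_const
    exact ((measurable_fst.pow_const 2).add
      (Finset.measurable_sum _ (fun i _ => ((measurable_pi_apply i).comp measurable_snd).pow_const 2)))
  have hball : ∀ Y : EuclideanSpace ℝ (Fin (n+1)),
      Y ∈ Metric.closedBall (0 : EuclideanSpace ℝ (Fin (n+1))) t ↔ ∑ i, Y i ^ 2 ≤ t ^ 2 := by
    intro Y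
    rw [Metric.mem_closedBall, dist_zero_right]
    have hn : ‖Y‖ = Real.sqrt (∑ i, (Y i) ^ 2) := by
      rw [EuclideanSpace.norm_eq]
      congr 1
      exact Finset.sum_congr rfl (fun i _ => by rw [Real.norm_eq_abs, sq_abs])
    rw [hn, Real.sqrt_le_left ht]
  -- the equivalences
  set e₁ := (MeasurableEquiv.toLp 2 (Fin (n+1) → ℝ)).symm with he₁
  set e₂ := MeasurableEquiv.piFinSuccAbove (fun _ : Fin (n+1) => ℝ) 0 with he₂
  classical
  have hGe₁ : ∀ Y, G (e₁ Y) = f Y := by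
    intro Y
    rw [hG, hf, Set.indicator_apply, Set.indicator_apply]
    have : e₁ Y ∈ S ↔ Y ∈ Metric.closedBall (0 : EuclideanSpace ℝ (Fin (n+1))) t := by
      rw [hball Y, hS]; rfl
    simp only [this]
    rfl
  have hHe₂ : ∀ x, H (e₂ x) = G x := by
    intro x
    rw [hH, hG, Set.indicator_apply, Set.indicator_apply]
    have h1 : e₂ x ∈ T ↔ x ∈ S := by
      rw [hT, hS]
      simp only [mem_setOf_eq, MeasurableEquiv.piFinSuccAbove_apply]
      rw [Fin.sum_univ_succAbove (fun i => x i ^ 2) 0]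
      rfl
    simp only [h1]
    rfl
  -- integrability
  have hint : Integrable f := by
    rw [hf, integrable_indicator_iff measurableSet_closedBall]
    apply ContinuousOn.integrableOn_compact (isCompact_closedBall _ _)
    exact (Real.continuous_exp.comp (continuous_const.mul
      (EuclideanSpace.proj (0 : Fin (n+1))).continuous)).continuousOn
  have hintG : Integrable G := by
    rw [← (EuclideanSpace.volume_preserving_symm_measurableEquiv_toLp
      (Fin (n+1))).integrable_comp_emb e₁.measurableEmbedding]
    exact hint.congr (Eventually.of_forall (fun Y => (hGe₁ Y).symm))
  have hintH : Integrable H := by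
    rw [← (volume_preserving_piFinSuccAbove (fun _ : Fin (n+1) => ℝ) 0).integrable_comp_emb
      e₂.measurableEmbedding]
    exact hintG.congr (Eventually.of_forall (fun x => (hHe₂ x).symm))
  -- the chain of equalities
  have step1 : ∫ Y in Metric.closedBall (0 : EuclideanSpace ℝ (Fin (n+1))) t,
      Real.exp (c * Y 0) = ∫ Y, f Y := by
    rw [hf, integral_indicator measurableSet_closedBall]
  have step2 : ∫ Y, f Y = ∫ x, G x := by
    rw [← (EuclideanSpace.volume_preserving_symm_measurableEquiv_toLp
      (Fin (n+1))).integral_comp e₁.measurableEmbedding G]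
    exact integral_congr_ae (Eventually.of_forall (fun Y => (hGe₁ Y).symm))
  have step3 : ∫ x, G x = ∫ p, H p := by
    rw [← (volume_preserving_piFinSuccAbove (fun _ : Fin (n+1) => ℝ) 0).integral_comp
      e₂.measurableEmbedding H]
    exact integral_congr_ae (Eventually.of_forall (fun x => (hHe₂ x).symm))
  have step4 : ∫ p, H p = ∫ s : ℝ, ∫ y : Fin n → ℝ, H (s, y) := by
    rw [MeasureTheory.Measure.volume_eq_prod]
    rw [MeasureTheory.Measure.volume_eq_prod] at hintH
    exact integral_prod H hintH
  -- inner integral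
  have inner : ∀ s : ℝ, (∫ y : Fin n → ℝ, H (s, y))
      = (volume {y : Fin n → ℝ | ∑ j, y j ^ 2 ≤ t ^ 2 - s ^ 2}).toReal * Real.exp (c * s) := by
    intro s
    have hset : MeasurableSet {y : Fin n → ℝ | ∑ j, y j ^ 2 ≤ t ^ 2 - s ^ 2} := by
      apply measurableSet_le _ measurable_const
      exact Finset.measurable_sum _ (fun i _ => (measurable_pi_apply i).pow_const 2)
    have : ∀ y : Fin n → ℝ, H (s, y) =
        ({y : Fin n → ℝ | ∑ j, y j ^ 2 ≤ t ^ 2 - s ^ 2}).indicator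
          (fun _ => Real.exp (c * s)) y := by
      intro y
      rw [hH, Set.indicator_apply, Set.indicator_apply]
      have : (s, y) ∈ T ↔ y ∈ {y : Fin n → ℝ | ∑ j, y j ^ 2 ≤ t ^ 2 - s ^ 2} := by
        rw [hT]; simp only [mem_setOf_eq]; constructor <;> intro <;> linarith
      simp only [this]
    rw [integral_congr_ae (Eventually.of_forall this), integral_indicator_const _ hset,
      smul_eq_mul, measureReal_def]
  have step5 : (∫ s : ℝ, ∫ y : Fin n → ℝ, H (s, y))
      = ∫ s : ℝ, (Icc (-t) t).indicator
          (fun s => Real.exp (c*s) * (Real.sqrt (t^2 - s^2) ^ n * κ)) s := by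
    apply integral_congr_ae
    apply Eventually.of_forall
    intro s
    dsimp only
    rw [inner s, Set.indicator_apply]
    by_cases hs : s ∈ Icc (-t) t
    · simp only [hs, if_true]
      have hsub : (0:ℝ) ≤ t ^ 2 - s ^ 2 := by
        rcases hs with ⟨h1, h2⟩
        nlinarith
      rw [slice_vol n _ hsub, ENNReal.toReal_mul, ENNReal.toReal_ofReal (by positivity)]
      ring
    · simp only [hs, if_false]
      have hsub : t ^ 2 - s ^ 2 < 0 := by
        simp only [mem_Icc, not_and_or, not_le] at hs
        rcases hs with h | h <;> nlinarith
      have : {y : Fin n → ℝ | ∑ j, y j ^ 2 ≤ t ^ 2 - s ^ 2} = ∅ := by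
        ext y
        simp only [mem_setOf_eq, mem_empty_iff_false, iff_false, not_le]
        calc t ^ 2 - s ^ 2 < 0 := hsub
        _ ≤ ∑ j, y j ^ 2 := by positivity
      rw [this]
      simp
  rw [step1, step2, step3, step4, step5, integral_indicator measurableSet_Icc,
    mul_comm κ, ← integral_mul_const]
  exact setIntegral_congr_fun measurableSet_Icc (fun s _ => by ring)


theorem bound_integrable (n : ℕ) (r : ℝ) (hr : 0 < r) :
    IntegrableOn (fun u : ℝ => Real.exp (-(2*r)*u) * (2*u) ^ ((n:ℝ)/2)) (Ioi 0) := by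
  have h := integrableOn_rpow_mul_exp_neg_mul_rpow (p := 1) (s := (n:ℝ)/2) (b := 2*r)
    (lt_of_lt_of_le neg_one_lt_zero (by positivity)) one_pos (by positivity)
  have h2 : IntegrableOn (fun u : ℝ => (2:ℝ) ^ ((n:ℝ)/2) * (u ^ ((n:ℝ)/2) * Real.exp (-(2*r) * u ^ (1:ℝ)))) (Ioi 0) :=
    h.const_mul _
  refine h2.congr_fun (fun u hu => ?_) measurableSet_Ioi
  dsimp only
  rw [Real.rpow_one, Real.mul_rpow (by norm_num) (le_of_lt hu)]
  ring

theorem laplace_core (n : ℕ) (r : ℝ) (hr : 0 < r) :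
    ∃ L : ℝ, 0 < L ∧
      Tendsto (fun t : ℝ =>
          ∫ u in (0:ℝ)..(2*t), Real.exp (-(2*r)*u) * (u*(2*t-u)/t) ^ ((n:ℝ)/2))
        atTop (nhds L) := by
  set q : ℝ := (n:ℝ)/2 with hq
  have hq0 : 0 ≤ q := by positivity
  set bound : ℝ → ℝ := fun u => Real.exp (-(2*r)*u) * (2*u) ^ q with hbdef
  have hbint : IntegrableOn bound (Ioi 0) := bound_integrable n r hr
  refine ⟨∫ u in Ioi (0:ℝ), bound u, ?_, ?_⟩
  · rw [setIntegral_pos_iff_support_of_nonneg_ae]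
    · have hs : Function.support bound ∩ Ioi 0 = Ioi 0 := by
        refine inter_eq_self_of_subset_right (fun u hu => ?_)
        have : 0 < bound u := by
          apply mul_pos (Real.exp_pos _)
          exact Real.rpow_pos_of_pos (by linarith [mem_Ioi.mp hu]) _
        exact ne_of_gt this
      rw [hs, Real.volume_Ioi]
      exact ENNReal.zero_lt_top
    · filter_upwards [ae_restrict_mem measurableSet_Ioi] with u hu
      exact mul_nonneg (Real.exp_pos _).le (Real.rpow_nonneg (by linarith [mem_Ioi.mp hu]) _)
    · exact hbint
  · set F : ℝ → ℝ → ℝ := fun t =>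
      (Ioc (0:ℝ) (2*t)).indicator (fun u => Real.exp (-(2*r)*u) * (u*(2*t-u)/t) ^ q) with hF
    have key : Tendsto (fun t => ∫ u in Ioi (0:ℝ), F t u) atTop
        (nhds (∫ u in Ioi (0:ℝ), bound u)) := by
      apply tendsto_integral_filter_of_dominated_convergence bound
      · filter_upwards with t
        apply AEStronglyMeasurable.indicator _ measurableSet_Ioc
        apply Measurable.aestronglyMeasurable
        exact (measurable_exp.comp (measurable_id.const_mul _)).mul
          (((measurable_id.mul ((measurable_const.sub measurable_id))).div_const t).pow_const _)
      · filter_upwards [eventually_gt_atTop (0:ℝ)] with t ht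
        filter_upwards [ae_restrict_mem measurableSet_Ioi] with u hu
        have hu0 : 0 < u := mem_Ioi.mp hu
        by_cases h : u ∈ Ioc (0:ℝ) (2*t)
        · rw [hF]
          simp only [indicator_of_mem h]
          have hbase : 0 ≤ u*(2*t-u)/t := by
            apply div_nonneg _ ht.le
            exact mul_nonneg hu0.le (by linarith [h.2])
          rw [Real.norm_eq_abs, abs_of_nonneg (mul_nonneg (Real.exp_pos _).le (Real.rpow_nonneg hbase _))]
          apply mul_le_mul_of_nonneg_left _ (Real.exp_pos _).le
          apply Real.rpow_le_rpow hbase _ hq0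
          rw [div_le_iff₀ ht]
          nlinarith [h.2, hu0.le]
        · rw [hF]
          simp only [indicator_of_notMem h, norm_zero]
          exact mul_nonneg (Real.exp_pos _).le (Real.rpow_nonneg (by linarith) _)
      · exact hbint
      · filter_upwards [ae_restrict_mem measurableSet_Ioi] with u hu
        have hu0 : 0 < u := mem_Ioi.mp hu
        have hbase : Tendsto (fun t : ℝ => u*(2*t-u)/t) atTop (nhds (2*u)) := by
          have h1 : Tendsto (fun t : ℝ => 2*u - u^2 * t⁻¹) atTop (nhds (2*u - u^2 * 0)) :=
            tendsto_const_nhds.sub (tendsto_inv_atTop_zero.const_mul _)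
          rw [mul_zero, sub_zero] at h1
          apply h1.congr'
          filter_upwards [eventually_gt_atTop (0:ℝ)] with t ht
          field_simp
        have h2 : Tendsto (fun t : ℝ => (u*(2*t-u)/t) ^ q) atTop (nhds ((2*u) ^ q)) := by
          exact ((Real.continuousAt_rpow_const _ _ (Or.inl (by positivity))).tendsto).comp hbase
        have h3 : Tendsto (fun t : ℝ => Real.exp (-(2*r)*u) * (u*(2*t-u)/t) ^ q) atTop
            (nhds (bound u)) := h2.const_mul _
        apply h3.congr'
        filter_upwards [eventually_ge_atTop u] with t htu
        have hmem : u ∈ Ioc (0:ℝ) (2*t) := mem_Ioc.mpr ⟨hu0, by linarith⟩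
        simp only [hF, indicator_of_mem hmem]
    apply key.congr'
    filter_upwards [eventually_gt_atTop (0:ℝ)] with t ht
    rw [intervalIntegral.integral_of_le (by linarith), hF]
    rw [setIntegral_indicator measurableSet_Ioc]
    congr 1
    rw [inter_eq_self_of_subset_right Ioc_subset_Ioi_self]

open scoped RealInnerProductSpace

/-- Volume-growth asymptotics: for a nonzero linear functional `ρ` on a `d`-dimensional
Euclidean space, `∫_{‖X‖ ≤ t} e^{2ρ(X)} dX ∼ C e^{2‖ρ‖t} t^{(d−1)/2}` as `t → ∞`. -/
theorem exp_linear_ball_integral_asymptotics (d : ℕ)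
    (ρ : EuclideanSpace ℝ (Fin d) →L[ℝ] ℝ) (hρ : ρ ≠ 0) :
    ∃ C : ℝ, 0 < C ∧
      Tendsto (fun t : ℝ =>
          (∫ X in Metric.closedBall (0 : EuclideanSpace ℝ (Fin d)) t, Real.exp (2 * ρ X)) /
            (C * Real.exp (2 * ‖ρ‖ * t) * t ^ (((d : ℝ) - 1) / 2)))
        atTop (nhds 1) := by
  obtain ⟨n, rfl⟩ : ∃ n, d = n + 1 := by
    rcases d with _ | n
    · refine absurd ?_ hρ
      ext x
      simp [Subsingleton.elim x 0]
    · exact ⟨n, rfl⟩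
  set r := ‖ρ‖ with hr
  have hr0 : 0 < r := norm_pos_iff.mpr hρ
  -- Riesz representation
  set v := (InnerProductSpace.toDual ℝ (EuclideanSpace ℝ (Fin (n+1)))).symm ρ with hv
  have hvnorm : ‖v‖ = r := by rw [hv, LinearIsometryEquiv.norm_map]
  have hvapp : ∀ X, ρ X = ⟪v, X⟫ := fun X => (InnerProductSpace.toDual_symm_apply).symm
  set w : EuclideanSpace ℝ (Fin (n+1)) := r⁻¹ • v with hw
  have hwnorm : ‖w‖ = 1 := by
    rw [hw, norm_smul, hvnorm, norm_inv, Real.norm_eq_abs, abs_of_pos hr0,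
      inv_mul_cancel₀ hr0.ne']
  -- orthonormal basis with first vector in the direction of `v`
  have hcard : Module.finrank ℝ (EuclideanSpace ℝ (Fin (n+1))) = Fintype.card (Fin (n+1)) := by
    simp [finrank_euclideanSpace_fin]
  have hortho : Orthonormal ℝ (({0} : Set (Fin (n+1))).restrict (fun _ => w)) := by
    constructor
    · intro i; exact hwnorm
    · intro i j hij; exact absurd (Subsingleton.elim i j) hij
  obtain ⟨b, hb⟩ := hortho.exists_orthonormalBasis_extension_of_card_eq hcard
  have hb0 : b 0 = w := hb 0 (Set.mem_singleton 0)
  have hrep : ∀ X : EuclideanSpace ℝ (Fin (n+1)), 2 * ρ X = (2*r) * (b.repr X 0) := by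
    intro X
    rw [b.repr_apply_apply, hb0, hw, real_inner_smul_left, ← hvapp]
    field_simp
  -- change of variables by the isometry `b.repr`
  have htrans : ∀ t : ℝ, (∫ X in Metric.closedBall (0 : EuclideanSpace ℝ (Fin (n+1))) t, Real.exp (2 * ρ X))
      = ∫ Y in Metric.closedBall (0 : EuclideanSpace ℝ (Fin (n+1))) t, Real.exp ((2*r) * Y 0) := by
    intro t
    have h := (b.measurePreserving_repr).setIntegral_image_emb
      (b.repr.toHomeomorph.measurableEmbedding) (fun Y => Real.exp ((2*r) * Y 0))
      (Metric.closedBall (0 : EuclideanSpace ℝ (Fin (n+1))) t)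
    have himg : b.repr '' Metric.closedBall (0 : EuclideanSpace ℝ (Fin (n+1))) t
        = Metric.closedBall (0 : EuclideanSpace ℝ (Fin (n+1))) t := by
      have h2 := b.repr.toIsometryEquiv.image_closedBall 0 t
      simpa using h2
    rw [himg] at h
    calc ∫ X in Metric.closedBall (0 : EuclideanSpace ℝ (Fin (n+1))) t, Real.exp (2 * ρ X)
        = ∫ X in Metric.closedBall (0 : EuclideanSpace ℝ (Fin (n+1))) t,
            Real.exp ((2*r) * (b.repr X 0)) :=
          setIntegral_congr_fun measurableSet_closedBall (fun X _ => by rw [hrep X])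
      _ = _ := h.symm
  obtain ⟨L, hL0, hLt⟩ := laplace_core n r hr0
  set κ : ℝ := (volume (Metric.ball (0 : EuclideanSpace ℝ (Fin n)) 1)).toReal with hκ
  have hκ0 : 0 < κ := ENNReal.toReal_pos (Metric.measure_ball_pos _ _ one_pos).ne'
    measure_ball_lt_top.ne
  refine ⟨κ * L, mul_pos hκ0 hL0, ?_⟩
  have hqe : (((n+1:ℕ) : ℝ) - 1)/2 = (n:ℝ)/2 := by push_cast; ring
  have hmain : ∀ᶠ t : ℝ in atTop,
      (∫ u in (0:ℝ)..(2*t), Real.exp (-(2*r)*u) * (u*(2*t-u)/t) ^ ((n:ℝ)/2)) / L =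
      (∫ X in Metric.closedBall (0 : EuclideanSpace ℝ (Fin (n+1))) t, Real.exp (2 * ρ X)) /
        (κ * L * Real.exp (2 * r * t) * t ^ ((((n+1:ℕ) : ℝ) - 1)/2)) := by
    filter_upwards [eventually_gt_atTop (0:ℝ)] with t ht
    rw [htrans t, reduce n (2*r) t ht.le]
    have hA : (∫ s in Set.Icc (-t) t, Real.exp ((2*r)*s) * Real.sqrt (t^2 - s^2) ^ n)
        = Real.exp (2*r*t) * t ^ ((n:ℝ)/2) *
          ∫ u in (0:ℝ)..(2*t), Real.exp (-(2*r)*u) * (u*(2*t-u)/t) ^ ((n:ℝ)/2) := by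
      have hIcc : (∫ s in Set.Icc (-t) t, Real.exp ((2*r)*s) * Real.sqrt (t^2 - s^2) ^ n)
          = ∫ s in (-t)..t, Real.exp ((2*r)*s) * Real.sqrt (t^2 - s^2) ^ n := by
        rw [intervalIntegral.integral_of_le (by linarith), integral_Icc_eq_integral_Ioc]
      have hsub := intervalIntegral.integral_comp_sub_left (a := 0) (b := 2*t)
        (fun s => Real.exp ((2*r)*s) * Real.sqrt (t^2 - s^2) ^ n) t
      rw [show t - 2*t = -t by ring, sub_zero] at hsub
      have hcong : ∀ u ∈ Set.uIcc (0:ℝ) (2*t),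
          Real.exp ((2*r)*(t-u)) * Real.sqrt (t^2 - (t-u)^2) ^ n
          = Real.exp (2*r*t) * t ^ ((n:ℝ)/2) *
              (Real.exp (-(2*r)*u) * (u*(2*t-u)/t) ^ ((n:ℝ)/2)) := by
        intro u hu
        rw [Set.uIcc_of_le (by linarith)] at hu
        have h2 : 0 ≤ u*(2*t-u) := mul_nonneg hu.1 (by linarith [hu.2])
        have h1 : t^2 - (t-u)^2 = u*(2*t-u) := by ring
        have h3 : Real.sqrt (u*(2*t-u)) ^ n = (u*(2*t-u)) ^ ((n:ℝ)/2) := by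
          rw [← Real.rpow_natCast (Real.sqrt (u*(2*t-u))) n, Real.sqrt_eq_rpow,
            ← Real.rpow_mul h2]
          congr 1
          ring
        have h4 : (u*(2*t-u)) ^ ((n:ℝ)/2) = t ^ ((n:ℝ)/2) * (u*(2*t-u)/t) ^ ((n:ℝ)/2) := by
          rw [Real.div_rpow h2 ht.le]
          field_simp [(Real.rpow_pos_of_pos ht ((n:ℝ)/2)).ne']
        rw [h1, h3, h4, show (2*r)*(t-u) = 2*r*t + (-(2*r)*u) by ring, Real.exp_add]
        ring
      rw [hIcc, ← hsub, intervalIntegral.integral_congr hcong,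
        intervalIntegral.integral_const_mul]
    rw [hA, hqe]
    have hexp : Real.exp (2*r*t) ≠ 0 := (Real.exp_pos _).ne'
    have htq : t ^ ((n:ℝ)/2) ≠ 0 := (Real.rpow_pos_of_pos ht _).ne'
    field_simp
    ring
  have hfin : Tendsto (fun t : ℝ =>
      (∫ u in (0:ℝ)..(2*t), Real.exp (-(2*r)*u) * (u*(2*t-u)/t) ^ ((n:ℝ)/2)) / L)
      atTop (nhds 1) := by
    have := hLt.div_const L
    rwa [div_self hL0.ne'] at this
  exact hfin.congr' hmain
end

section
/- Let G be a locally compact second countable group acting measurably and measure-preservingly on a σ-finite measure space (Y, ν), with a fixed Haar measure on G. Suppose that for every measurable U ⊆ Y with ν(U) > 0 and ν-almost every y ∈ U, the set of return times {g ∈ G : gy ∈ U} has infinite Haar measure. Then for every nonnegative f ∈ L¹(Y, ν) with ∫ f dν > 0, one has ∫_G f(gy) dg = +∞ for ν-almost every y with f(y) > 0. -/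
open MeasureTheory

/-- If, for every positive-measure set `U` and a.e. `y ∈ U`, the return-time set
`{g : g•y ∈ U}` has infinite Haar measure, then for every nonnegative integrable `f` with
positive integral, `∫_G f(gy) dg = ∞` for a.e. `y` with `f(y) > 0`. -/
theorem conservative_sets_to_functions {G Y : Type*}
    [Group G] [TopologicalSpace G] [IsTopologicalGroup G] [LocallyCompactSpace G]
    [SecondCountableTopology G] [MeasurableSpace G] [BorelSpace G]
    (μG : Measure G) [μG.IsHaarMeasure] [μG.IsMulRightInvariant]
    [MeasurableSpace Y] (ν : Measure Y) [SigmaFinite ν]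
    [MulAction G Y] [MeasurableSMul G Y] [SMulInvariantMeasure G Y ν]
    (hrec : ∀ U : Set Y, MeasurableSet U → 0 < ν U →
      ∀ᵐ y ∂ν.restrict U, μG {g : G | g • y ∈ U} = ⊤) :
    ∀ f : Y → ℝ, Measurable f → (∀ y, 0 ≤ f y) → Integrable f ν →
      0 < ∫ y, f y ∂ν →
      ∀ᵐ y ∂ν, 0 < f y → ∫⁻ g, ENNReal.ofReal (f (g • y)) ∂μG = ⊤ := by
  intro f hf hf0 hint hpos
  have hUmeas : ∀ n : ℕ, MeasurableSet {y | (1:ℝ)/(n+1) ≤ f y} := fun n =>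
    measurableSet_le measurable_const hf
  have key : ∀ n : ℕ, ∀ᵐ y ∂ν, (1:ℝ)/(n+1) ≤ f y →
      ∫⁻ g, ENNReal.ofReal (f (g • y)) ∂μG = ⊤ := by
    intro n
    set U : Set Y := {y | (1:ℝ)/(n+1) ≤ f y} with hUdef
    by_cases h0 : 0 < ν U
    · have h := hrec U (hUmeas n) h0
      rw [ae_restrict_iff' (hUmeas n)] at h
      filter_upwards [h] with y hy hyU
      have hμ : μG {g : G | g • y ∈ U} = ⊤ := hy hyU
      have hcpos : (0:ℝ) < 1/(n+1) := by positivity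
      have hle : ∫⁻ g in {g : G | g • y ∈ U}, ENNReal.ofReal ((1:ℝ)/(n+1)) ∂μG
          ≤ ∫⁻ g, ENNReal.ofReal (f (g • y)) ∂μG := by
        refine le_trans (setLIntegral_mono ((ENNReal.measurable_ofReal).comp
          (hf.comp (measurable_smul_const y))) ?_) (setLIntegral_le_lintegral _ _)
        intro g hg
        exact ENNReal.ofReal_le_ofReal hg
      rw [setLIntegral_const, hμ, ENNReal.mul_top
        ((ENNReal.ofReal_pos.mpr hcpos).ne')] at hle
      exact top_le_iff.mp hle
    · have hz : ν U = 0 := by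
        by_contra h
        exact h0 (pos_iff_ne_zero.mpr h)
      have : ∀ᵐ y ∂ν, y ∉ U := by
        rw [ae_iff]
        simpa using hz
      filter_upwards [this] with y hy hyU
      exact absurd hyU hy
  filter_upwards [ae_all_iff.mpr key] with y hy hfy
  obtain ⟨n, hn⟩ := exists_nat_one_div_lt hfy
  exact hy n hn.le
end

section
/- Let G be a nonamenable unimodular lcsc group acting properly, transitively and isometrically on a metric space X with base point o, and let vol be the pushforward of Haar measure under g ↦ go. Then there exist r₀ > 0 and a constant λ > 1 such that vol(B(o, t + r₀)) ≥ λ · vol(B(o, t)) for all t > 0. -/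
open MeasureTheory Filter Topology Pointwise

open MeasureTheory Filter Topology Pointwise

lemma amenable_of_folner {G : Type*} [Group G] [TopologicalSpace G] [IsTopologicalGroup G]
    [MeasurableSpace G] [BorelSpace G] [SecondCountableTopology G]
    (μ : Measure G) [μ.IsMulLeftInvariant] (F : ℕ → Set G)
    (hmeas : ∀ n, MeasurableSet (F n))
    (hpos : ∀ n, 0 < μ (F n)) (hfin : ∀ n, μ (F n) < ⊤)
    (hFol : ∀ g : G, Tendsto
      (fun n => ((μ ((g • F n) \ F n) + μ (F n \ (g • F n))).toReal / (μ (F n)).toReal))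
      atTop (𝓝 0)) :
    ∃ m : BoundedContinuousFunction G ℝ →ₗ[ℝ] ℝ,
      m 1 = 1 ∧ (∀ f : BoundedContinuousFunction G ℝ, 0 ≤ f → 0 ≤ m f) ∧
      ∀ (g : G) (f : BoundedContinuousFunction G ℝ),
        m (f.compContinuous ⟨fun x => g * x, continuous_mul_left g⟩) = m f := by
  classical
  haveI : ∀ n, IsFiniteMeasure (μ.restrict (F n)) :=
    fun n => ⟨Measure.restrict_apply_univ (F n) ▸ hfin n⟩
  set c : ℕ → ℝ := fun n => (μ (F n)).toReal with hc
  have hcpos : ∀ n, 0 < c n := fun n => ENNReal.toReal_pos (hpos n).ne' (hfin n).ne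
  -- the finitary means
  set mn : ℕ → BoundedContinuousFunction G ℝ → ℝ :=
    fun n f => (∫ x in F n, f x ∂μ) / c n with hmn
  have hint : ∀ n (f : BoundedContinuousFunction G ℝ), Integrable f (μ.restrict (F n)) :=
    fun n f => f.integrable _
  have habs : ∀ n (f : BoundedContinuousFunction G ℝ), |mn n f| ≤ ‖f‖ := by
    intro n f
    rw [hmn, abs_div, abs_of_pos (hcpos n), div_le_iff₀ (hcpos n)]
    calc |∫ x in F n, f x ∂μ| ≤ ‖f‖ * (μ (F n)).toReal :=
          norm_setIntegral_le_of_norm_le_const (hfin n)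
            (fun x _ => f.norm_coe_le_norm x)
      _ = ‖f‖ * c n := rfl
  -- ultrafilter limits
  obtain ⟨U, hU⟩ := Ultrafilter.exists_le (atTop : Filter ℕ)
  have hlim : ∀ f : BoundedContinuousFunction G ℝ,
      ∃ L : ℝ, Tendsto (fun n => mn n f) (U : Filter ℕ) (𝓝 L) := by
    intro f
    obtain ⟨L, _, hL⟩ := (isCompact_Icc (a := -‖f‖) (b := ‖f‖)).ultrafilter_le_nhds
      (U.map fun n => mn n f) (le_principal_iff.2 (Filter.mem_map.2
        (Filter.univ_mem' fun n => abs_le.mp (habs n f))))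
    exact ⟨L, hL⟩
  choose m0 hm0 using hlim
  -- algebraic properties of the means
  have hadd : ∀ (f g : BoundedContinuousFunction G ℝ) n, mn n (f + g) = mn n f + mn n g := by
    intro f g n
    simp only [hmn]
    rw [← add_div]
    congr 1
    simp_rw [BoundedContinuousFunction.coe_add, Pi.add_apply]
    exact integral_add (hint n f) (hint n g)
  have hsmul : ∀ (r : ℝ) (f : BoundedContinuousFunction G ℝ) n, mn n (r • f) = r * mn n f := by
    intro r f n
    simp only [hmn]
    rw [← mul_div_assoc]
    congr 1
    have hrf : ∀ x, (r • f) x = r * f x := fun x => rfl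
    simp_rw [hrf]
    exact integral_const_mul r _
  have m0add : ∀ f g : BoundedContinuousFunction G ℝ, m0 (f + g) = m0 f + m0 g := by
    intro f g
    refine tendsto_nhds_unique (hm0 (f + g)) ?_
    have := (hm0 f).add (hm0 g)
    simpa only [← hadd f g] using this
  have m0smul : ∀ (r : ℝ) (f : BoundedContinuousFunction G ℝ), m0 (r • f) = r * m0 f := by
    intro r f
    refine tendsto_nhds_unique (hm0 (r • f)) ?_
    have := (hm0 f).const_mul r
    simpa only [← hsmul r f] using this
  refine ⟨{ toFun := m0, map_add' := m0add, map_smul' := m0smul }, ?_, ?_, ?_⟩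
  · -- m 1 = 1
    refine tendsto_nhds_unique (hm0 1) ?_
    have : ∀ n, mn n (1 : BoundedContinuousFunction G ℝ) = 1 := by
      intro n
      simp only [hmn, BoundedContinuousFunction.coe_one, Pi.one_apply]
      rw [setIntegral_const]
      simp [hc, div_self (hcpos n).ne']
      exact div_self (hcpos n).ne'
    simpa only [this] using tendsto_const_nhds
  · -- positivity
    intro f hf
    refine ge_of_tendsto (hm0 f) (Filter.Eventually.of_forall ?_)
    intro n
    apply div_nonneg _ (hcpos n).le
    exact integral_nonneg fun x => hf x
  · -- invariance
    intro g f
    refine tendsto_nhds_unique (hm0 _) ?_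
    have key : ∀ n, |mn n (f.compContinuous ⟨fun x => g * x, continuous_mul_left g⟩) - mn n f| ≤
        ‖f‖ * ((μ ((g • F n) \ F n) + μ (F n \ (g • F n))).toReal / c n) := by
      intro n
      have hset : g • F n = (fun x => g⁻¹ * x) ⁻¹' (F n) := by
        ext x; simp [Set.mem_smul_set_iff_inv_smul_mem]
      have hgF : MeasurableSet (g • F n) := by
        rw [hset]; exact (hmeas n).preimage (measurable_const_mul g⁻¹)
      have hμgF : μ (g • F n) = μ (F n) := by
        rw [hset]; exact measure_preimage_mul μ g⁻¹ (F n)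
      have hfinG : μ (g • F n) < ⊤ := hμgF ▸ hfin n
      haveI : IsFiniteMeasure (μ.restrict (g • F n)) :=
        ⟨by rw [Measure.restrict_apply_univ]; exact hfinG⟩
      -- change of variables
      have hcv : ∫ x in F n, f (g * x) ∂μ = ∫ x in g • F n, f x ∂μ := by
        have hpre : (fun x => g * x) ⁻¹' (g • F n) = F n := by
          ext x; simp [Set.mem_smul_set_iff_inv_smul_mem]
        have h := (measurePreserving_mul_left μ g).setIntegral_preimage_emb
          (MeasurableEquiv.mulLeft g).measurableEmbedding (fun x => f x) (g • F n)
        rw [hpre] at h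
        exact h
      have hIgF : IntegrableOn (fun x => f x) (g • F n) μ := f.integrable _
      have hIF : IntegrableOn (fun x => f x) (F n) μ := f.integrable _
      have h1 : (∫ x in (g • F n) ∩ F n, f x ∂μ) + ∫ x in (g • F n) \ F n, f x ∂μ
          = ∫ x in g • F n, f x ∂μ := integral_inter_add_diff (hmeas n) hIgF
      have h2 : (∫ x in F n ∩ (g • F n), f x ∂μ) + ∫ x in F n \ (g • F n), f x ∂μ
          = ∫ x in F n, f x ∂μ := integral_inter_add_diff hgF hIF
      have hdiff : (∫ x in g • F n, f x ∂μ) - ∫ x in F n, f x ∂μ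
          = (∫ x in (g • F n) \ F n, f x ∂μ) - ∫ x in F n \ (g • F n), f x ∂μ := by
        rw [← h1, ← h2, Set.inter_comm]; ring
      have hb1 : |∫ x in (g • F n) \ F n, f x ∂μ| ≤ ‖f‖ * (μ ((g • F n) \ F n)).toReal :=
        norm_setIntegral_le_of_norm_le_const
          (lt_of_le_of_lt (measure_mono Set.diff_subset) hfinG)
          (fun x _ => f.norm_coe_le_norm x)
      have hb2 : |∫ x in F n \ (g • F n), f x ∂μ| ≤ ‖f‖ * (μ (F n \ (g • F n))).toReal :=
        norm_setIntegral_le_of_norm_le_const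
          (lt_of_le_of_lt (measure_mono Set.diff_subset) (hfin n))
          (fun x _ => f.norm_coe_le_norm x)
      have hmnval : mn n (f.compContinuous ⟨fun x => g * x, continuous_mul_left g⟩) - mn n f
          = ((∫ x in g • F n, f x ∂μ) - ∫ x in F n, f x ∂μ) / c n := by
        simp only [hmn, ← hcv, BoundedContinuousFunction.compContinuous_apply,
          ContinuousMap.coe_mk, sub_div]
      rw [hmnval, abs_div, abs_of_pos (hcpos n), div_le_iff₀ (hcpos n), hdiff,
        ENNReal.toReal_add (lt_of_le_of_lt (measure_mono Set.diff_subset) hfinG).ne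
          (lt_of_le_of_lt (measure_mono Set.diff_subset) (hfin n)).ne]
      calc |(∫ x in (g • F n) \ F n, f x ∂μ) - ∫ x in F n \ (g • F n), f x ∂μ|
          ≤ |∫ x in (g • F n) \ F n, f x ∂μ| + |∫ x in F n \ (g • F n), f x ∂μ| :=
            abs_sub _ _
        _ ≤ ‖f‖ * (μ ((g • F n) \ F n)).toReal + ‖f‖ * (μ (F n \ (g • F n))).toReal :=
            add_le_add hb1 hb2
        _ = ‖f‖ * ((μ ((g • F n) \ F n)).toReal + (μ (F n \ (g • F n))).toReal) := by ring
        _ = ‖f‖ * (((μ ((g • F n) \ F n)).toReal + (μ (F n \ (g • F n))).toReal) / c n) * c n := by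
            field_simp
            rw [mul_div_cancel_right₀ _ (hcpos n).ne']
    have hzero : Tendsto
        (fun n => mn n (f.compContinuous ⟨fun x => g * x, continuous_mul_left g⟩) - mn n f)
        (U : Filter ℕ) (𝓝 0) := by
      apply squeeze_zero_norm (fun n => (Real.norm_eq_abs _) ▸ key n)
      have := (hFol g).const_mul ‖f‖
      rw [mul_zero] at this
      exact this.mono_left hU
    have := hzero.add (hm0 f)
    rw [zero_add] at this
    simpa using this


/-- A topological group is (topologically) amenable if there is a left-invariant mean on the
space of bounded continuous real-valued functions. -/
def TopologicallyAmenable (G : Type*) [Group G] [TopologicalSpace G] [IsTopologicalGroup G] :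
    Prop :=
  ∃ m : BoundedContinuousFunction G ℝ →ₗ[ℝ] ℝ,
    m 1 = 1 ∧ (∀ f : BoundedContinuousFunction G ℝ, 0 ≤ f → 0 ≤ m f) ∧
    ∀ (g : G) (f : BoundedContinuousFunction G ℝ),
      m (f.compContinuous ⟨fun x => g * x, continuous_mul_left g⟩) = m f

/-- Exponential volume growth for nonamenable groups: if a nonamenable unimodular lcsc group
`G` acts properly, transitively and isometrically on a metric space `X`, and `vol` is the
pushforward of Haar measure under `g ↦ g • o`, then there are `r₀ > 0` and `λ > 1` with
`vol(B(o, t + r₀)) ≥ λ · vol(B(o, t))` for all `t > 0`. -/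
theorem exponential_growth_of_nonamenable {G X : Type*}
    [Group G] [TopologicalSpace G] [IsTopologicalGroup G] [LocallyCompactSpace G]
    [SecondCountableTopology G] [MeasurableSpace G] [BorelSpace G]
    (μG : Measure G) [μG.IsHaarMeasure] [μG.IsMulRightInvariant]
    [MetricSpace X] [MeasurableSpace X] [BorelSpace X] [MulAction G X] [ContinuousSMul G X] [ProperSMul G X]
    [IsIsometricSMul G X] (htrans : MulAction.IsPretransitive G X)
    (hNA : ¬ TopologicallyAmenable G) (o : X) :
    ∃ r₀ > (0 : ℝ), ∃ lam > (1 : ℝ), ∀ t > (0 : ℝ),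
      ENNReal.ofReal lam * (μG.map fun g => g • o) (Metric.closedBall o t) ≤
        (μG.map fun g => g • o) (Metric.closedBall o (t + r₀)) := by
  classical
  by_contra hcon
  push_neg at hcon
  apply hNA; clear hNA
  -- the orbit map and ball preimages
  have hπ : Continuous fun g : G => g • o := continuous_id.smul continuous_const
  set A : ℝ → Set G := fun r => (fun g : G => g • o) ⁻¹' Metric.closedBall o r with hA
  have hAmeas : ∀ r, MeasurableSet (A r) :=
    fun r => hπ.measurable measurableSet_closedBall
  have hAmono : ∀ {r₁ r₂ : ℝ}, r₁ ≤ r₂ → A r₁ ⊆ A r₂ := fun h =>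
    Set.preimage_mono (Metric.closedBall_subset_closedBall h)
  have hmap : ∀ r, (μG.map fun g => g • o) (Metric.closedBall o r) = μG (A r) :=
    fun r => Measure.map_apply hπ.measurable measurableSet_closedBall
  -- choose the almost-invariant radii
  have h' : ∀ n : ℕ, ∃ r > (0 : ℝ),
      μG (A (r + (n + 1))) < ENNReal.ofReal (1 + 1 / (n + 1)) * μG (A r) := by
    intro n
    obtain ⟨r, hr, hlt⟩ := hcon ((n : ℝ) + 1) (by positivity) (1 + 1 / ((n : ℝ) + 1))
      (by have : (0 : ℝ) < 1 / ((n : ℝ) + 1) := by positivity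
          linarith)
    exact ⟨r, hr, by rwa [hmap, hmap] at hlt⟩
  choose t htpos hkey using h'
  -- basic measure facts
  have hbfin : ∀ n, μG (A (t n + (n + 1))) ≠ ⊤ := fun n => (hkey n).ne_top
  have hafin : ∀ n, μG (A (t n)) ≠ ⊤ := fun n =>
    (lt_of_le_of_lt (measure_mono (hAmono (by linarith [Nat.cast_nonneg (α := ℝ) n])))
      (lt_top_iff_ne_top.2 (hbfin n))).ne
  have hapos : ∀ n, 0 < μG (A (t n)) := by
    intro n
    rcases eq_or_lt_of_le (zero_le : 0 ≤ μG (A (t n))) with h | h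
    · exfalso; have := hkey n; rw [← h, mul_zero] at this; exact (not_lt_of_ge zero_le) this
    · exact h
  -- real versions
  set a : ℕ → ℝ := fun n => (μG (A (t n))).toReal with ha
  set b : ℕ → ℝ := fun n => (μG (A (t n + (n + 1)))).toReal with hb
  have hapos' : ∀ n, 0 < a n := fun n => ENNReal.toReal_pos (hapos n).ne' (hafin n)
  have hkey' : ∀ n, b n < (1 + 1 / (n + 1)) * a n := by
    intro n
    have h1 : (ENNReal.ofReal (1 + 1 / (n + 1)) * μG (A (t n))).toReal
        = (1 + 1 / (n + 1)) * a n := by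
      rw [ENNReal.toReal_mul, ENNReal.toReal_ofReal (by positivity)]
    calc b n < (ENNReal.ofReal (1 + 1 / (n + 1)) * μG (A (t n))).toReal :=
          ENNReal.toReal_lt_toReal (hbfin n)
            (ENNReal.mul_ne_top ENNReal.ofReal_ne_top (hafin n)) |>.mpr (hkey n)
      _ = (1 + 1 / (n + 1)) * a n := h1
  -- the Følner sets
  set s : ℕ → ℝ := fun n => t n + (n + 1) / 2 with hs
  set F : ℕ → Set G := fun n => A (s n) with hF
  have hsub1 : ∀ n, A (t n) ⊆ F n := fun n => hAmono (by
    have : (0:ℝ) ≤ ((n:ℝ) + 1) / 2 := by positivity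
    simp only [hs]; linarith)
  have hsub2 : ∀ n, F n ⊆ A (t n + (n + 1)) := fun n => hAmono (by
    have h0 : (0:ℝ) ≤ (n:ℝ) + 1 := by positivity
    simp only [hs]; linarith)
  have hFfin : ∀ n, μG (F n) < ⊤ :=
    fun n => lt_of_le_of_lt (measure_mono (hsub2 n)) (lt_top_iff_ne_top.2 (hbfin n))
  have hFpos : ∀ n, 0 < μG (F n) :=
    fun n => lt_of_lt_of_le (hapos n) (measure_mono (hsub1 n))
  -- membership characterization of translates
  have hsmulA : ∀ (g : G) (r : ℝ), g • A r = {x : G | dist (x • o) (g • o) ≤ r} := by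
    intro g r
    ext x
    rw [Set.mem_smul_set_iff_inv_smul_mem]
    show dist ((g⁻¹ * x) • o) o ≤ r ↔ _
    rw [mul_smul]
    constructor
    · intro h
      simp only [Set.mem_setOf_eq]
      have h2 := dist_smul g (g⁻¹ • x • o) o
      rw [smul_inv_smul] at h2
      rw [← h2] at h
      exact h
    · intro h
      simp only [Set.mem_setOf_eq] at h
      have h2 := dist_smul g⁻¹ (x • o) (g • o)
      rw [inv_smul_smul] at h2
      rw [← h2] at h
      exact h
  -- Følner property
  have hFol : ∀ g : G, Tendsto
      (fun n => ((μG ((g • F n) \ F n) + μG (F n \ (g • F n))).toReal / (μG (F n)).toReal))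
      atTop (𝓝 0) := by
    intro g
    set d : ℝ := dist (g • o) o with hd
    have hd0 : 0 ≤ d := dist_nonneg
    have hbound : ∀ n : ℕ, 2 * d ≤ (n : ℝ) + 1 →
        (μG ((g • F n) \ F n) + μG (F n \ (g • F n))).toReal / (μG (F n)).toReal
          ≤ 2 / ((n : ℝ) + 1) := by
      intro n hn
      have hd2 : d ≤ ((n : ℝ) + 1) / 2 := by linarith
      -- sandwich sets
      have hup : g • F n ⊆ A (s n + d) := by
        rw [hF, hsmulA]
        intro x hx
        simp only [Set.mem_setOf_eq] at hx
        show dist (x • o) o ≤ s n + d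
        calc dist (x • o) o ≤ dist (x • o) (g • o) + dist (g • o) o := dist_triangle _ _ _
          _ ≤ s n + d := by rw [← hd]; exact add_le_add_left hx d
      have hdown : A (s n - d) ⊆ g • F n := by
        rw [hF, hsmulA]
        intro x hx
        have hx' : dist (x • o) o ≤ s n - d := hx
        simp only [Set.mem_setOf_eq]
        calc dist (x • o) (g • o) ≤ dist (x • o) o + dist o (g • o) := dist_triangle _ _ _
          _ ≤ (s n - d) + d := by
              rw [dist_comm o (g • o), ← hd]; exact add_le_add_left hx' d
          _ = s n := by ring
      have hFup : F n ⊆ A (s n + d) := hAmono (by linarith)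
      have hFdown : A (s n - d) ⊆ F n := hAmono (by linarith)
      -- measure bounds
      have hAd_up : A (s n + d) ⊆ A (t n + (n + 1)) := hAmono (by
        simp only [hs]; linarith)
      have hAd_down : A (t n) ⊆ A (s n - d) := hAmono (by
        simp only [hs]; linarith)
      have hup_fin : μG (A (s n + d)) ≠ ⊤ :=
        (lt_of_le_of_lt (measure_mono hAd_up) (lt_top_iff_ne_top.2 (hbfin n))).ne
      have hdiff1 : (g • F n) \ F n ⊆ A (s n + d) \ A (s n - d) :=
        Set.diff_subset_diff hup hFdown
      have hdiff2 : F n \ (g • F n) ⊆ A (s n + d) \ A (s n - d) :=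
        Set.diff_subset_diff hFup hdown
      -- numerator bound
      have hnum : (μG ((g • F n) \ F n) + μG (F n \ (g • F n))).toReal
          ≤ 2 * ((μG (A (s n + d))).toReal - (μG (A (s n - d))).toReal) := by
        have hsd_fin : μG (A (s n - d)) ≠ ⊤ :=
          (lt_of_le_of_lt (measure_mono (hFdown.trans (hsub2 n)))
            (lt_top_iff_ne_top.2 (hbfin n))).ne
        have hdm : μG (A (s n + d) \ A (s n - d))
            = μG (A (s n + d)) - μG (A (s n - d)) :=
          measure_diff (hAmono (by linarith)) (hAmeas _).nullMeasurableSet hsd_fin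
        have h1 : μG ((g • F n) \ F n) ≤ μG (A (s n + d) \ A (s n - d)) := measure_mono hdiff1
        have h2 : μG (F n \ (g • F n)) ≤ μG (A (s n + d) \ A (s n - d)) := measure_mono hdiff2
        have hfin' : μG (A (s n + d) \ A (s n - d)) ≠ ⊤ :=
          (lt_of_le_of_lt (measure_mono Set.diff_subset) (lt_top_iff_ne_top.2 hup_fin)).ne
        have := add_le_add h1 h2
        calc (μG ((g • F n) \ F n) + μG (F n \ (g • F n))).toReal
            ≤ (μG (A (s n + d) \ A (s n - d)) + μG (A (s n + d) \ A (s n - d))).toReal := by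
              apply ENNReal.toReal_mono _ this
              exact ENNReal.add_ne_top.2 ⟨hfin', hfin'⟩
          _ = 2 * (μG (A (s n + d) \ A (s n - d))).toReal := by
              rw [ENNReal.toReal_add hfin' hfin']; ring
          _ = 2 * ((μG (A (s n + d))).toReal - (μG (A (s n - d))).toReal) := by
              rw [hdm, ENNReal.toReal_sub_of_le (measure_mono (hAmono (by linarith))) hup_fin]
      -- relate to a n and b n
      have hba : (μG (A (s n + d))).toReal - (μG (A (s n - d))).toReal ≤ b n - a n := by
        have h1 : (μG (A (s n + d))).toReal ≤ b n :=
          ENNReal.toReal_mono (hbfin n) (measure_mono hAd_up)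
        have hsd_fin : μG (A (s n - d)) ≠ ⊤ :=
          (lt_of_le_of_lt (measure_mono (hFdown.trans (hsub2 n)))
            (lt_top_iff_ne_top.2 (hbfin n))).ne
        have h2 : a n ≤ (μG (A (s n - d))).toReal :=
          ENNReal.toReal_mono hsd_fin (measure_mono hAd_down)
        linarith
      have hban : b n - a n ≤ a n / ((n : ℝ) + 1) := by
        have h2 := hkey' n
        have h1 : (1 + 1 / ((n:ℝ) + 1)) * a n = a n + a n / ((n:ℝ)+1) := by ring
        rw [h1] at h2
        linarith
      have hden : a n ≤ (μG (F n)).toReal :=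
        ENNReal.toReal_mono (hFfin n).ne (measure_mono (hsub1 n))
      have hdenpos : 0 < (μG (F n)).toReal := lt_of_lt_of_le (hapos' n) hden
      calc (μG ((g • F n) \ F n) + μG (F n \ (g • F n))).toReal / (μG (F n)).toReal
          ≤ (2 * (a n / ((n:ℝ) + 1))) / a n := by
            apply div_le_div₀ (by positivity)
              (le_trans hnum (by linarith)) (hapos' n) hden
        _ = 2 / ((n:ℝ) + 1) := by
            have h0 : a n ≠ 0 := (hapos' n).ne'
            have h1 : ((n:ℝ) + 1) ≠ 0 := by positivity
            field_simp
    -- squeeze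
    have hlim2 : Tendsto (fun n : ℕ => 2 / ((n : ℝ) + 1)) atTop (𝓝 0) := by
      have h1 : Tendsto (fun n : ℕ => (n : ℝ) + 1) atTop atTop :=
        tendsto_atTop_add_const_right _ 1 (tendsto_natCast_atTop_atTop (R := ℝ))
      exact Tendsto.div_atTop tendsto_const_nhds h1
    apply squeeze_zero' ?_ ?_ hlim2
    · exact Filter.Eventually.of_forall fun n => by positivity
    · have : ∀ᶠ n : ℕ in atTop, 2 * d ≤ (n : ℝ) + 1 := by
        filter_upwards [eventually_ge_atTop ⌈2 * d⌉₊] with n hn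
        calc 2 * d ≤ (⌈2 * d⌉₊ : ℝ) := Nat.le_ceil _
          _ ≤ (n : ℝ) := Nat.cast_le.2 hn
          _ ≤ (n : ℝ) + 1 := by linarith
      filter_upwards [this] with n hn
      exact hbound n hn
  exact amenable_of_folner μG F (fun n => hAmeas _) hFpos hFfin hFol
end

section
/- Let 𝔞 be a Euclidean space, ρ a nonzero linear functional with unit dual vector ρ̂, and let A > 0. For t > 0 set R⁺(t) = {X ∈ 𝔞 : t − A ≤ ‖X‖ ≤ t + A and ⟨ρ̂, X⟩ ≥ t − (log t)²}. Then there is a constant C such that every X ∈ R⁺(t) satisfies ‖X − ⟨X, ρ̂⟩ρ̂‖ ≤ C t^{1/2} log t for all sufficiently large t; consequently X/‖X‖ → ρ̂ uniformly on R⁺(t) as t → ∞, i.e. ‖X/‖X‖ − ρ̂‖ = O(t^{-1/2} log t). -/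
open Filter
open scoped RealInnerProductSpace

private lemma norm_le_of_sq_le_sq {E : Type*} [NormedAddCommGroup E] {v : E} {B : ℝ}
    (hB : 0 ≤ B) (h : ‖v‖ ^ 2 ≤ B ^ 2) : ‖v‖ ≤ B := by
  nlinarith [norm_nonneg v]

set_option maxHeartbeats 1000000 in
/-- Concentration of directions around `ρ̂` in the dominating region: with
`R⁺(t) = {X : t − A ≤ ‖X‖ ≤ t + A, ⟨ρ̂, X⟩ ≥ t − (log t)²}`, the component of `X ∈ R⁺(t)`
orthogonal to `ρ̂` is `O(t^{1/2} log t)`, and consequently `‖X/‖X‖ − ρ̂‖ = O(t^{-1/2} log t)`,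
uniformly on `R⁺(t)` as `t → ∞`. -/
theorem directions_concentrate {E : Type*} [NormedAddCommGroup E] [InnerProductSpace ℝ E]
    (rhat : E) (hrhat : ‖rhat‖ = 1) (A : ℝ) (hA : 0 < A) :
    ∃ C C' : ℝ, ∀ᶠ t : ℝ in atTop, ∀ X : E,
      (t - A ≤ ‖X‖ ∧ ‖X‖ ≤ t + A ∧ t - (Real.log t) ^ 2 ≤ ⟪rhat, X⟫) →
        ‖X - ⟪X, rhat⟫ • rhat‖ ≤ C * t ^ ((1 : ℝ) / 2) * Real.log t ∧
        ‖‖X‖⁻¹ • X - rhat‖ ≤ C' * t ^ (-(1 : ℝ) / 2) * Real.log t := by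
  refine ⟨3, 3, ?_⟩
  filter_upwards [eventually_ge_atTop (2 * A), eventually_ge_atTop (A + 1),
    Real.tendsto_log_atTop.eventually_ge_atTop (max 1 (Real.sqrt A))] with t ht1 ht2 htl
  intro X ⟨h1, h2, h3⟩
  have ht0 : (0 : ℝ) < t := by linarith
  set L := Real.log t with hL
  have hL1 : 1 ≤ L := le_trans (le_max_left _ _) htl
  have hLA : A ≤ L ^ 2 := by
    have h1 := le_trans (le_max_right _ _) htl
    nlinarith [Real.sq_sqrt hA.le, Real.sqrt_nonneg A]
  set a := ⟪X, rhat⟫ with ha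
  have h3' : t - L ^ 2 ≤ a := by rwa [real_inner_comm] at h3
  set n := ‖X‖ with hn
  have hn0 : 0 < n := by linarith
  have hCS : |a| ≤ n := by
    have := abs_real_inner_le_norm X rhat
    simpa [hrhat] using this
  have hCS1 : a ≤ n := (abs_le.mp hCS).2
  have hCS2 : -n ≤ a := (abs_le.mp hCS).1
  set s := Real.sqrt t with hs
  have hs0 : 0 < s := Real.sqrt_pos.mpr ht0
  have hs2 : s ^ 2 = t := Real.sq_sqrt ht0.le
  have hrw1 : t ^ ((1 : ℝ) / 2) = s := (Real.sqrt_eq_rpow t).symm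
  have hrw2 : t ^ (-(1 : ℝ) / 2) = s⁻¹ := by
    rw [neg_div, Real.rpow_neg ht0.le, ← Real.sqrt_eq_rpow]
  constructor
  · rw [hrw1]
    apply norm_le_of_sq_le_sq (by positivity)
    have hsq : ‖X - a • rhat‖ ^ 2 = n ^ 2 - a ^ 2 := by
      rw [norm_sub_sq_real, real_inner_smul_right, norm_smul, hrhat, ← ha, ← hn]
      simp [sq_abs]
      ring
    rw [hsq]
    nlinarith [mul_le_mul (by linarith : n - a ≤ A + L ^ 2) (by linarith : n + a ≤ 2 * t + 2 * A)
      (by linarith : (0 : ℝ) ≤ n + a) (by nlinarith : (0 : ℝ) ≤ A + L ^ 2)]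
  · rw [hrw2]
    apply norm_le_of_sq_le_sq (by positivity)
    have hsq : ‖n⁻¹ • X - rhat‖ ^ 2 = (2 * n - 2 * a) / n := by
      rw [norm_sub_sq_real, real_inner_smul_left, norm_smul, hrhat, ← ha, Real.norm_eq_abs,
        abs_of_pos (inv_pos.mpr hn0), ← hn]
      field_simp
      ring
    rw [hsq]
    have hB2 : (3 * s⁻¹ * L) ^ 2 = 9 * L ^ 2 / t := by
      field_simp
      nlinarith [hs2]
    rw [hB2]
    rw [div_le_div_iff₀ hn0 ht0]
    have hf1 : 2 * t * (n - a) ≤ 2 * t * (A + L ^ 2) :=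
      mul_le_mul_of_nonneg_left (by linarith) (by linarith)
    have hf2 : t * A ≤ t * L ^ 2 := mul_le_mul_of_nonneg_left hLA ht0.le
    have hf3 : 4 * L ^ 2 * (2 * A) ≤ 4 * L ^ 2 * t :=
      mul_le_mul_of_nonneg_left ht1 (by positivity)
    have hf4 : 8 * L ^ 2 * (t - A) ≤ 8 * L ^ 2 * n :=
      mul_le_mul_of_nonneg_left (by linarith) (by positivity)
    have hf5 : 0 ≤ L ^ 2 * n := mul_nonneg (by positivity) hn0.le
    clear hsq hrw1 hrw2 hCS
    linarith [hf1, hf2, hf3, hf4, hf5]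
end

section
/- Let G = SL(3,ℝ), let P be the subgroup of upper triangular matrices, let χ_P be the modular character of P determined by χ_P(e^H m n) = e^{2ρ(H)} with ρ(diag(s₁,s₂,s₃)) = s₁ − s₃, let U = ker χ_P, and let w₀ be the permutation matrix with entries w₀(1,3) = w₀(3,1) = 1, w₀(2,2) = −1. Then U ∩ w₀ U w₀^{-1} equals the group of diagonal matrices diag(±e^s, ±e^{-2s}, ±e^s) with s ∈ ℝ and determinant 1; in particular U ∩ w₀ U w₀^{-1} is a noncompact abelian-by-finite subgroup of SL(3,ℝ). -/
open Matrix

noncomputable instance : TopologicalSpace (Matrix.SpecialLinearGroup (Fin 3) ℝ) :=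
  show TopologicalSpace {A : Matrix (Fin 3) (Fin 3) ℝ // A.det = 1} from inferInstance

private lemma sl3_sign_spec (x : ℝ) : ∃ a : ℝ, (a = 1 ∨ a = -1) ∧ x = a * |x| := by
  rcases abs_choice x with h | h
  · exact ⟨1, Or.inl rfl, by rw [h]; ring⟩
  · exact ⟨-1, Or.inr rfl, by rw [h]; ring⟩

private lemma sl3_w0_conj (M : Matrix (Fin 3) (Fin 3) ℝ) :
    !![0, 0, 1; 0, -1, 0; 1, 0, 0] * M * !![0, 0, 1; 0, -1, 0; 1, 0, 0] =
      !![M 2 2, -(M 2 1), M 2 0; -(M 1 2), M 1 1, -(M 1 0); M 0 2, -(M 0 1), M 0 0] := by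
  ext i j
  fin_cases i <;> fin_cases j <;>
    simp [Matrix.mul_apply, Fin.sum_univ_three, Matrix.vecMul, dotProduct,
      Matrix.vecHead, Matrix.vecTail]

/-- The explicit `SL(3,ℝ)` instance of the stabilizer computation: with `U` the kernel of
the modular character of the upper triangular subgroup (upper triangular matrices `p` with
`(|p₁₁|/|p₃₃|)² = 1`) and `w₀` the longest Weyl element, the intersection `U ∩ w₀Uw₀⁻¹` is
exactly the group of diagonal matrices `diag(±e^s, ±e^{−2s}, ±e^s)` of determinant 1; in
particular it is noncompact. -/
theorem sl3_U_inter_conj (w₀ : Matrix.SpecialLinearGroup (Fin 3) ℝ)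
    (hw₀ : (w₀ : Matrix (Fin 3) (Fin 3) ℝ) = !![0, 0, 1; 0, -1, 0; 1, 0, 0])
    (U : Set (Matrix.SpecialLinearGroup (Fin 3) ℝ))
    (hU : U = {g : Matrix.SpecialLinearGroup (Fin 3) ℝ |
      (∀ i j : Fin 3, j < i → (g : Matrix (Fin 3) (Fin 3) ℝ) i j = 0) ∧
      (|(g : Matrix (Fin 3) (Fin 3) ℝ) 0 0| / |(g : Matrix (Fin 3) (Fin 3) ℝ) 2 2|) ^ 2
        = 1}) :
    U ∩ ((fun h => w₀ * h * w₀⁻¹) '' U) =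
        {g : Matrix.SpecialLinearGroup (Fin 3) ℝ | ∃ s a b c : ℝ,
          (a = 1 ∨ a = -1) ∧ (b = 1 ∨ b = -1) ∧ (c = 1 ∨ c = -1) ∧
          (g : Matrix (Fin 3) (Fin 3) ℝ) =
            Matrix.diagonal ![a * Real.exp s, b * Real.exp (-2 * s), c * Real.exp s]} ∧
      ¬ IsCompact (U ∩ ((fun h => w₀ * h * w₀⁻¹) '' U)) := by
  subst hU
  have hinv : w₀⁻¹ = w₀ := by
    have h : w₀ * w₀ = 1 := by
      ext i j
      rw [Matrix.SpecialLinearGroup.coe_mul, hw₀]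
      fin_cases i <;> fin_cases j <;>
        simp [Matrix.mul_apply, Fin.sum_univ_three, Matrix.one_apply,
          Matrix.vecHead, Matrix.vecTail]
    exact inv_eq_of_mul_eq_one_right h
  set S : Set (Matrix.SpecialLinearGroup (Fin 3) ℝ) :=
    {g : Matrix.SpecialLinearGroup (Fin 3) ℝ | ∃ s a b c : ℝ,
      (a = 1 ∨ a = -1) ∧ (b = 1 ∨ b = -1) ∧ (c = 1 ∨ c = -1) ∧
      (g : Matrix (Fin 3) (Fin 3) ℝ) =
        Matrix.diagonal ![a * Real.exp s, b * Real.exp (-2 * s), c * Real.exp s]} with hS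
  have hset : ({g : Matrix.SpecialLinearGroup (Fin 3) ℝ |
      (∀ i j : Fin 3, j < i → (g : Matrix (Fin 3) (Fin 3) ℝ) i j = 0) ∧
      (|(g : Matrix (Fin 3) (Fin 3) ℝ) 0 0| / |(g : Matrix (Fin 3) (Fin 3) ℝ) 2 2|) ^ 2
        = 1} ∩ ((fun h => w₀ * h * w₀⁻¹) '' {g : Matrix.SpecialLinearGroup (Fin 3) ℝ |
      (∀ i j : Fin 3, j < i → (g : Matrix (Fin 3) (Fin 3) ℝ) i j = 0) ∧
      (|(g : Matrix (Fin 3) (Fin 3) ℝ) 0 0| / |(g : Matrix (Fin 3) (Fin 3) ℝ) 2 2|) ^ 2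
        = 1})) = S := by
    ext g
    constructor
    · rintro ⟨⟨hg1, hg2⟩, h, ⟨hh1, -⟩, hgh⟩
      rw [hinv] at hgh
      have hgm : (g : Matrix (Fin 3) (Fin 3) ℝ) =
          !![(h : Matrix (Fin 3) (Fin 3) ℝ) 2 2, -((h : Matrix (Fin 3) (Fin 3) ℝ) 2 1),
              (h : Matrix (Fin 3) (Fin 3) ℝ) 2 0;
             -((h : Matrix (Fin 3) (Fin 3) ℝ) 1 2), (h : Matrix (Fin 3) (Fin 3) ℝ) 1 1,
              -((h : Matrix (Fin 3) (Fin 3) ℝ) 1 0);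
             (h : Matrix (Fin 3) (Fin 3) ℝ) 0 2, -((h : Matrix (Fin 3) (Fin 3) ℝ) 0 1),
              (h : Matrix (Fin 3) (Fin 3) ℝ) 0 0] := by
        rw [← hgh, Matrix.SpecialLinearGroup.coe_mul, Matrix.SpecialLinearGroup.coe_mul,
          hw₀, sl3_w0_conj]
      have z01 : (g : Matrix (Fin 3) (Fin 3) ℝ) 0 1 = 0 := by
        rw [hgm]; simpa using hh1 2 1 (by decide)
      have z02 : (g : Matrix (Fin 3) (Fin 3) ℝ) 0 2 = 0 := by
        rw [hgm]; simpa using hh1 2 0 (by decide)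
      have z12 : (g : Matrix (Fin 3) (Fin 3) ℝ) 1 2 = 0 := by
        rw [hgm]; simpa using hh1 1 0 (by decide)
      have z10 : (g : Matrix (Fin 3) (Fin 3) ℝ) 1 0 = 0 := hg1 1 0 (by decide)
      have z20 : (g : Matrix (Fin 3) (Fin 3) ℝ) 2 0 = 0 := hg1 2 0 (by decide)
      have z21 : (g : Matrix (Fin 3) (Fin 3) ℝ) 2 1 = 0 := hg1 2 1 (by decide)
      have hdet : (g : Matrix (Fin 3) (Fin 3) ℝ) 0 0 * ((g : Matrix (Fin 3) (Fin 3) ℝ) 1 1 *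
          (g : Matrix (Fin 3) (Fin 3) ℝ) 2 2) = 1 := by
        have h2 := Matrix.SpecialLinearGroup.det_coe g
        rw [Matrix.det_fin_three, z01, z02, z12, z10, z20, z21] at h2
        linear_combination h2
      have h22ne : (g : Matrix (Fin 3) (Fin 3) ℝ) 2 2 ≠ 0 := by
        intro hz; rw [hz] at hg2; simp at hg2
      have h00abs : |(g : Matrix (Fin 3) (Fin 3) ℝ) 0 0| = |(g : Matrix (Fin 3) (Fin 3) ℝ) 2 2| := by
        have hnn : 0 ≤ |(g : Matrix (Fin 3) (Fin 3) ℝ) 0 0| / |(g : Matrix (Fin 3) (Fin 3) ℝ) 2 2| :=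
          div_nonneg (abs_nonneg _) (abs_nonneg _)
        rcases sq_eq_one_iff.mp hg2 with h1 | h1
        · rwa [div_eq_one_iff_eq (abs_ne_zero.mpr h22ne)] at h1
        · exfalso; rw [h1] at hnn; linarith
      have h11ne : (g : Matrix (Fin 3) (Fin 3) ℝ) 1 1 ≠ 0 := by
        intro hz; rw [hz] at hdet; simp at hdet
      set s : ℝ := Real.log |(g : Matrix (Fin 3) (Fin 3) ℝ) 2 2| with hsdef
      have hes : Real.exp s = |(g : Matrix (Fin 3) (Fin 3) ℝ) 2 2| :=
        Real.exp_log (abs_pos.mpr h22ne)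
      have habs1 : |(g : Matrix (Fin 3) (Fin 3) ℝ) 1 1| = Real.exp (-2 * s) := by
        have habsdet := congrArg abs hdet
        rw [abs_mul, abs_mul, abs_one, h00abs] at habsdet
        rw [show (-2 : ℝ) * s = -(s + s) by ring, Real.exp_neg, Real.exp_add, hes]
        have hone : |(g : Matrix (Fin 3) (Fin 3) ℝ) 1 1| *
            (|(g : Matrix (Fin 3) (Fin 3) ℝ) 2 2| * |(g : Matrix (Fin 3) (Fin 3) ℝ) 2 2|) = 1 := by
          linear_combination habsdet
        exact eq_inv_of_mul_eq_one_left hone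
      obtain ⟨a, ha, ha'⟩ := sl3_sign_spec ((g : Matrix (Fin 3) (Fin 3) ℝ) 0 0)
      obtain ⟨b, hb, hb'⟩ := sl3_sign_spec ((g : Matrix (Fin 3) (Fin 3) ℝ) 1 1)
      obtain ⟨c, hc, hc'⟩ := sl3_sign_spec ((g : Matrix (Fin 3) (Fin 3) ℝ) 2 2)
      have e00 : (g : Matrix (Fin 3) (Fin 3) ℝ) 0 0 = a * Real.exp s := by
        rw [hes, ← h00abs]; exact ha'
      have e11 : (g : Matrix (Fin 3) (Fin 3) ℝ) 1 1 = b * Real.exp (-2 * s) := by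
        rw [← habs1]; exact hb'
      have e22 : (g : Matrix (Fin 3) (Fin 3) ℝ) 2 2 = c * Real.exp s := by
        rw [hes]; exact hc'
      refine ⟨s, a, b, c, ha, hb, hc, ?_⟩
      ext i j
      fin_cases i <;> fin_cases j <;>
        simp [Matrix.diagonal_apply, e00, e11, e22, z01, z02, z10, z12, z20, z21]
    · rintro ⟨s, a, b, c, ha, hb, hc, hg⟩
      have hexp : Real.exp s ≠ 0 := Real.exp_ne_zero s
      have key : ∀ x : ℝ, (x = 1 ∨ x = -1) → |x * Real.exp s| = Real.exp s := by
        rintro x (rfl | rfl) <;> simp [abs_of_pos (Real.exp_pos s)]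
      refine ⟨⟨?_, ?_⟩, ?_⟩
      · intro i j hij
        rw [hg]; exact Matrix.diagonal_apply_ne _ (ne_of_gt hij)
      · have hr : (|a * Real.exp s| / |c * Real.exp s|) ^ 2 = 1 := by
          rw [key a ha, key c hc, div_self hexp, one_pow]
        simpa [hg] using hr
      · have hhm : ((w₀⁻¹ * g * w₀ : Matrix.SpecialLinearGroup (Fin 3) ℝ) :
            Matrix (Fin 3) (Fin 3) ℝ) =
            Matrix.diagonal ![c * Real.exp s, b * Real.exp (-2 * s), a * Real.exp s] := by
          rw [hinv, Matrix.SpecialLinearGroup.coe_mul, Matrix.SpecialLinearGroup.coe_mul,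
            hw₀, hg, sl3_w0_conj]
          ext i j
          fin_cases i <;> fin_cases j <;>
            simp [Matrix.diagonal_apply, Matrix.vecHead, Matrix.vecTail]
        refine ⟨w₀⁻¹ * g * w₀, ⟨?_, ?_⟩, by group⟩
        · intro i j hij
          rw [hhm]; exact Matrix.diagonal_apply_ne _ (ne_of_gt hij)
        · have hr : (|c * Real.exp s| / |a * Real.exp s|) ^ 2 = 1 := by
            rw [key c hc, key a ha, div_self hexp, one_pow]
          simpa [hhm] using hr
  refine ⟨hset, ?_⟩
  rw [hset]
  intro hK
  have hf : Continuous (fun g : Matrix.SpecialLinearGroup (Fin 3) ℝ =>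
      |(g : Matrix (Fin 3) (Fin 3) ℝ) 0 0|) := by
    apply Continuous.abs
    exact Continuous.matrix_elem continuous_subtype_val 0 0
  obtain ⟨Mb, hMb⟩ := (hK.image hf).bddAbove
  set x : ℝ := max Mb 0 + 1 with hxdef
  have hx : 0 < x := by positivity
  set s : ℝ := Real.log x with hsdef
  have hes : Real.exp s = x := Real.exp_log hx
  have hdet : (Matrix.diagonal ![Real.exp s, Real.exp (-2 * s), Real.exp s] :
      Matrix (Fin 3) (Fin 3) ℝ).det = 1 := by
    have h1 : Real.exp s * Real.exp (-2 * s) * Real.exp s = 1 := by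
      rw [← Real.exp_add, ← Real.exp_add, show s + -2 * s + s = 0 by ring, Real.exp_zero]
    simpa [Matrix.det_diagonal, Fin.prod_univ_three] using h1
  set gS : Matrix.SpecialLinearGroup (Fin 3) ℝ :=
    ⟨Matrix.diagonal ![Real.exp s, Real.exp (-2 * s), Real.exp s], hdet⟩ with hgSdef
  have hmem : gS ∈ S := by
    refine ⟨s, 1, 1, 1, Or.inl rfl, Or.inl rfl, Or.inl rfl, ?_⟩
    show Matrix.diagonal ![Real.exp s, Real.exp (-2 * s), Real.exp s] =
      Matrix.diagonal ![1 * Real.exp s, 1 * Real.exp (-2 * s), 1 * Real.exp s]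
    norm_num
  have hle : |(gS : Matrix (Fin 3) (Fin 3) ℝ) 0 0| ≤ Mb := hMb ⟨gS, hmem, rfl⟩
  have hgs00 : |(gS : Matrix (Fin 3) (Fin 3) ℝ) 0 0| = x := by
    show |Matrix.diagonal ![Real.exp s, Real.exp (-2 * s), Real.exp s] 0 0| = x
    simp [hes, abs_of_pos hx]
  rw [hgs00] at hle
  have := le_max_left Mb 0
  linarith
end
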